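/- arXiv:cs/0609161 — 14 statements merged into one kernel-verified Lean document; each statement's English description precedes it below -/
import Mathlib

section
/- The set Λ^m defined recursively by Λ^1 = ℕ₀ and Λ^m = q·Λ^{m-1} ∪ {i ∈ ℕ₀ : i ≥ q^m − q^⌊(m+1)/2⌋} is a numerical semigroup, i.e., it contains 0, is closed under addition, and has finite complement in ℕ₀. -/
/-- The Garcia–Stichtenoth tower of Weierstrass semigroups:
`Λ¹ = ℕ₀`, `Λᵐ = q·Λ^{m-1} ∪ {i : i ≥ qᵐ - q^⌊(m+1)/2⌋}` for `m ≥ 2`. -/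
def GSsemigroup (q : ℕ) : ℕ → Set ℕ
  | 0 => Set.univ
  | 1 => Set.univ
  | (m + 2) => (fun x => q * x) '' GSsemigroup q (m + 1) ∪
      {i : ℕ | q ^ (m + 2) - q ^ ((m + 3) / 2) ≤ i}

/-- `c_m = q^m - q^⌊(m+1)/2⌋`, the conductor of `Λ^m`. -/
def gsC (q m : ℕ) : ℕ := q ^ m - q ^ ((m + 1) / 2)

/-- `g_m = (q^⌊(m+1)/2⌋ - 1)(q^⌈(m-1)/2⌉ - 1)`, the genus of `Λ^m`
(note `⌈(m-1)/2⌉ = ⌊m/2⌋` for `m ≥ 1`). -/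
def gsG (q m : ℕ) : ℕ := (q ^ ((m + 1) / 2) - 1) * (q ^ (m / 2) - 1)

/-- `A_i = {j : q^{2i-1} - q^i ≤ j ≤ q^{2i-1} - q^{i-1} - 1}`. -/
def gsA (q i : ℕ) : Set ℕ :=
  {j : ℕ | q ^ (2 * i - 1) - q ^ i ≤ j ∧ j ≤ q ^ (2 * i - 1) - q ^ (i - 1) - 1}

/-- The enumeration `λ` of `Λ^m`: the increasing bijection `ℕ₀ → Λ^m`. -/
noncomputable def gsEnum (q m : ℕ) : ℕ → ℕ := Nat.nth (fun n => n ∈ GSsemigroup q m)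

/-- `ν_i = #{j : λ_i - λ_j ∈ Λ^m}` (the subtraction being in `ℤ`,
i.e. `∃ a ∈ Λ^m, λ_j + a = λ_i`). -/
noncomputable def gsNu (q m i : ℕ) : ℕ :=
  Set.ncard {j : ℕ | ∃ a ∈ GSsemigroup q m, gsEnum q m j + a = gsEnum q m i}

/-- The order (Feng–Rao) bound `δ_i = min {ν_j : j > i}`. -/
noncomputable def gsDelta (q m i : ℕ) : ℕ := sInf (gsNu q m '' {j : ℕ | i < j})

/-- The semigroup floor `⌊k⌋_{Λ^m}`: the largest element of `Λ^m` not exceeding `k`. -/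
noncomputable def gsFloor (q m k : ℕ) : ℕ := sSup {x ∈ GSsemigroup q m | x ≤ k}

/-- `λ⁻¹(x)` for `x ∈ Λ^m`: the number of elements of `Λ^m` below `x`. -/
noncomputable def gsLinv (q m x : ℕ) : ℕ := Set.ncard {y ∈ GSsemigroup q m | y < x}


lemma gs_aux (q : ℕ) : ∀ m : ℕ,
    0 ∈ GSsemigroup q m ∧
    (∀ a ∈ GSsemigroup q m, ∀ b ∈ GSsemigroup q m, a + b ∈ GSsemigroup q m) ∧
    (GSsemigroup q m)ᶜ.Finite := by
  intro m
  induction m using Nat.twoStepInduction with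
  | zero => exact ⟨trivial, fun _ _ _ _ => trivial, by simp [GSsemigroup]⟩
  | one => exact ⟨trivial, fun _ _ _ _ => trivial, by simp [GSsemigroup]⟩
  | more n _ ih =>
    obtain ⟨h0, hadd, _⟩ := ih
    refine ⟨Or.inl ⟨0, h0, by ring⟩, ?_, ?_⟩
    · rintro a (⟨a', ha', rfl⟩ | ha) b (⟨b', hb', rfl⟩ | hb)
      · exact Or.inl ⟨a' + b', hadd _ ha' _ hb', by ring⟩
      · exact Or.inr (le_trans hb (Nat.le_add_left _ _))
      · exact Or.inr (le_trans ha (Nat.le_add_right _ _))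
      · exact Or.inr (le_trans ha (Nat.le_add_right _ _))
    · apply Set.Finite.subset (Set.finite_Iio (q ^ (n + 2) - q ^ ((n + 3) / 2)))
      intro x hx
      simp only [GSsemigroup, Set.mem_compl_iff, Set.mem_union, Set.mem_setOf_eq,
        not_or, not_le] at hx
      exact hx.2

/-- each `Λ^m` is a numerical semigroup. -/
theorem stmt0 (q : ℕ) (hq : 2 ≤ q) (m : ℕ) (hm : 1 ≤ m) :
    0 ∈ GSsemigroup q m ∧
    (∀ a ∈ GSsemigroup q m, ∀ b ∈ GSsemigroup q m, a + b ∈ GSsemigroup q m) ∧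
    (GSsemigroup q m)ᶜ.Finite := by
  exact gs_aux q m
end

section
/- The conductor of Λ^m (the smallest c with c−1 ∉ Λ^m and c + ℕ₀ ⊆ Λ^m, for m ≥ 2) equals c_m = q^m − q^⌊(m+1)/2⌋. -/
/-- the conductor of `Λ^m` (for `m ≥ 2`) is `c_m = q^m - q^⌊(m+1)/2⌋`. -/
theorem stmt1 (q : ℕ) (hq : 2 ≤ q) (m : ℕ) (hm : 2 ≤ m) :
    gsC q m - 1 ∉ GSsemigroup q m ∧ ∀ n : ℕ, gsC q m ≤ n → n ∈ GSsemigroup q m := by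
  obtain ⟨m', rfl⟩ : ∃ m', m = m' + 2 := ⟨m - 2, by omega⟩
  have hcdef : gsC q (m' + 2) = q ^ (m' + 2) - q ^ ((m' + 3) / 2) := rfl
  have hpow : q * q ^ ((m' + 3) / 2) ≤ q ^ (m' + 2) := by
    calc q * q ^ ((m' + 3) / 2) = q ^ ((m' + 3) / 2 + 1) := by ring
    _ ≤ q ^ (m' + 2) := Nat.pow_le_pow_right (by omega) (by omega)
  have hqk : 2 * q ^ ((m' + 3) / 2) ≤ q * q ^ ((m' + 3) / 2) := Nat.mul_le_mul_right _ hq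
  have hqk0 : 0 < q ^ ((m' + 3) / 2) := Nat.pow_pos (by omega)
  have hdvd : q ∣ gsC q (m' + 2) := by
    rw [hcdef]
    exact Nat.dvd_sub (dvd_pow_self q (by omega)) (dvd_pow_self q (by omega))
  constructor
  · intro hmem
    rcases hmem with ⟨x, _, hx⟩ | hge
    · have h1 : q ∣ gsC q (m' + 2) - 1 := ⟨x, hx.symm⟩
      rw [hcdef] at h1 hdvd
      have h2 := Nat.dvd_sub hdvd h1
      have h3 : q ^ (m' + 2) - q ^ ((m' + 3) / 2) - (q ^ (m' + 2) - q ^ ((m' + 3) / 2) - 1) = 1 := by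
        omega
      rw [h3] at h2
      have := Nat.le_of_dvd one_pos h2
      omega
    · simp only [Set.mem_setOf_eq, hcdef] at hge
      omega
  · intro n hn
    rw [hcdef] at hn
    exact Or.inr hn
end

section
/- For all m ≥ 1, Λ^m equals the disjoint union of the sets q^{m−2i+1}·A_i for i = 1, …, ⌊m/2⌋, together with {j ∈ ℕ₀ : j ≥ c_m}, where A_i = {j ∈ ℕ₀ : q^{2i−1} − q^i ≤ j ≤ q^{2i−1} − q^{i−1} − 1} and c_m = q^m − q^⌊(m+1)/2⌋. Moreover these sets are pairwise disjoint. -/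
section GSaux

lemma gs_tail_split (q : ℕ) (hq : 2 ≤ q) (a : ℕ) :
    ((fun x => q * x) '' {j : ℕ | gsC q (2*a+1) ≤ j}) ∪ {j : ℕ | gsC q (2*a+2) ≤ j}
    = ((fun x => q ^ 1 * x) '' gsA q (a+1)) ∪ {j : ℕ | gsC q (2*a+2) ≤ j} := by
  have h1 : (2*a+1+1)/2 = a+1 := by omega
  have h2 : (2*a+2+1)/2 = a+1 := by omega
  have h3 : 2*(a+1)-1 = 2*a+1 := by omega
  have e1 : q * q ^ (2*a+1) = q ^ (2*a+2) := by ring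
  have e2 : q * q ^ a = q ^ (a+1) := by ring
  have e3 : q * q ^ (a+1) = q ^ (a+2) := by ring
  have p1 : q ^ a ≤ q ^ (a+1) := Nat.pow_le_pow_right (by omega) (by omega)
  have p2 : q ^ (a+1) ≤ q ^ (2*a+1) := Nat.pow_le_pow_right (by omega) (by omega)
  have p3 : 1 ≤ q ^ a := Nat.one_le_pow _ _ (by omega)
  have p4 : q ^ (a+1) ≤ q ^ (2*a+2) := Nat.pow_le_pow_right (by omega) (by omega)
  simp only [gsC, gsA, h1, h2, h3, pow_one]
  ext y
  simp only [Set.mem_union, Set.mem_image, Set.mem_setOf_eq]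
  constructor
  · rintro (⟨x, hx, rfl⟩ | h)
    · by_cases hle : x ≤ q ^ (2*a+1) - q ^ a - 1
      · exact Or.inl ⟨x, ⟨hx, hle⟩, rfl⟩
      · right
        have hx' : q ^ (2*a+1) - q ^ a ≤ x := by omega
        have : q * (q ^ (2*a+1) - q ^ a) ≤ q * x := Nat.mul_le_mul_left q hx'
        rw [Nat.mul_sub, e1, e2] at this
        omega
    · exact Or.inr h
  · rintro (⟨x, ⟨hx1, _⟩, rfl⟩ | h)
    · exact Or.inl ⟨x, hx1, rfl⟩
    · exact Or.inr h

lemma gs_tail_odd (q : ℕ) (hq : 2 ≤ q) (a : ℕ) :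
    ((fun x => q * x) '' {j : ℕ | gsC q (2*a+2) ≤ j}) ∪ {j : ℕ | gsC q (2*a+3) ≤ j}
    = {j : ℕ | gsC q (2*a+3) ≤ j} := by
  have h1 : (2*a+2+1)/2 = a+1 := by omega
  have h2 : (2*a+3+1)/2 = a+2 := by omega
  have e1 : q * q ^ (2*a+2) = q ^ (2*a+3) := by ring
  have e2 : q * q ^ (a+1) = q ^ (a+2) := by ring
  simp only [gsC, h1, h2]
  apply Set.union_eq_self_of_subset_left
  rintro y ⟨x, hx, rfl⟩
  simp only [Set.mem_setOf_eq] at hx ⊢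
  have : q * (q ^ (2*a+2) - q ^ (a+1)) ≤ q * x := Nat.mul_le_mul_left q hx
  rw [Nat.mul_sub, e1, e2] at this
  omega

lemma gs_B_bounds (q m i x : ℕ) (hq : 2 ≤ q) (h1 : 1 ≤ i) (h2 : 2*i ≤ m)
    (hx : x ∈ gsA q i) :
    q ^ m ≤ q ^ (m - 2*i + 1) * x + q ^ (m - i + 1) ∧
      q ^ (m - 2*i + 1) * x + q ^ (m - i) + q ^ (m - 2*i + 1) ≤ q ^ m := by
  obtain ⟨hx1, hx2⟩ := hx
  have E1 : q ^ (m - 2*i + 1) * q ^ (2*i - 1) = q ^ m := by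
    rw [← pow_add]; congr 1; omega
  have E2 : q ^ (m - 2*i + 1) * q ^ i = q ^ (m - i + 1) := by
    rw [← pow_add]; congr 1; omega
  have E3 : q ^ (m - 2*i + 1) * q ^ (i-1) = q ^ (m - i) := by
    rw [← pow_add]; congr 1; omega
  have pq : q ^ (i-1) * q = q ^ i := by rw [← pow_succ]; congr 1; omega
  have pi2 : q ^ i ≤ q ^ (2*i-1) := Nat.pow_le_pow_right (by omega) (by omega)
  have pi1 : 1 ≤ q ^ (i-1) := Nat.one_le_pow _ _ (by omega)
  have h2q : q ^ (i-1) * 2 ≤ q ^ (i-1) * q := Nat.mul_le_mul_left _ hq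
  have hub : x + q ^ (i-1) + 1 ≤ q ^ (2*i-1) := by omega
  have hlb : q ^ (2*i-1) ≤ x + q ^ i := by omega
  constructor
  · calc q ^ m = q ^ (m - 2*i + 1) * q ^ (2*i - 1) := E1.symm
    _ ≤ q ^ (m - 2*i + 1) * (x + q ^ i) := Nat.mul_le_mul_left _ hlb
    _ = q ^ (m - 2*i + 1) * x + q ^ (m - i + 1) := by rw [mul_add, E2]
  · have := Nat.mul_le_mul_left (q ^ (m - 2*i + 1)) hub
    rw [mul_add, mul_add, mul_one, E3, E1] at this
    omega

lemma gs_disj_pair (q m i j : ℕ) (hq : 2 ≤ q) (h1 : 1 ≤ i) (hij : i < j) (hj : j ≤ m / 2) :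
    Disjoint ((fun x => q ^ (m - 2 * i + 1) * x) '' gsA q i)
      ((fun x => q ^ (m - 2 * j + 1) * x) '' gsA q j) := by
  rw [Set.disjoint_left]
  rintro y ⟨x1, hx1, rfl⟩ ⟨x2, hx2, hy⟩
  have B1 := gs_B_bounds q m i x1 hq h1 (by omega) hx1
  have B2 := gs_B_bounds q m j x2 hq (by omega) (by omega) hx2
  simp only at hy
  rw [hy] at B2
  have hle : q ^ (m - j + 1) ≤ q ^ (m - i) := Nat.pow_le_pow_right (by omega) (by omega)
  have hpos : 1 ≤ q ^ (m - 2*i + 1) := Nat.one_le_pow _ _ (by omega)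
  omega

lemma gs_disj_tail (q m i : ℕ) (hq : 2 ≤ q) (h1 : 1 ≤ i) (hi : i ≤ m / 2) :
    Disjoint ((fun x => q ^ (m - 2 * i + 1) * x) '' gsA q i) {j : ℕ | gsC q m ≤ j} := by
  rw [Set.disjoint_left]
  rintro y ⟨x, hx, rfl⟩ hy
  simp only [Set.mem_setOf_eq, gsC] at hy
  have B := gs_B_bounds q m i x hq h1 (by omega) hx
  have hle : q ^ ((m+1)/2) ≤ q ^ (m - i) := Nat.pow_le_pow_right (by omega) (by omega)
  have hpos : 1 ≤ q ^ (m - 2*i + 1) := Nat.one_le_pow _ _ (by omega)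
  omega

lemma gs_key (q : ℕ) (hq : 2 ≤ q) : ∀ m : ℕ, 1 ≤ m →
    GSsemigroup q m =
      (⋃ i ∈ Finset.Icc 1 (m / 2), (fun x => q ^ (m - 2 * i + 1) * x) '' gsA q i) ∪
        {j : ℕ | gsC q m ≤ j} := by
  intro m
  induction m using Nat.strong_induction_on with
  | _ m IH =>
  match m with
  | 0 => omega
  | 1 =>
    intro _
    ext y
    simp [GSsemigroup, gsC]
  | (k+2) =>
    intro _
    have IH1 := IH (k+1) (by omega) (by omega)
    have hGS : GSsemigroup q (k+2) =
        (fun x => q * x) '' GSsemigroup q (k+1) ∪ {j : ℕ | gsC q (k+2) ≤ j} := by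
      rw [GSsemigroup, show k+3 = k+2+1 from by omega]
      simp only [gsC]
    rw [hGS, IH1, Set.image_union, Set.image_iUnion₂]
    have shift : ∀ i ∈ Finset.Icc 1 ((k+1)/2),
        (fun x => q * x) '' ((fun x => q ^ ((k+1) - 2*i + 1) * x) '' gsA q i)
          = (fun x => q ^ ((k+2) - 2*i + 1) * x) '' gsA q i := by
      intro i hi
      simp only [Finset.mem_Icc] at hi
      rw [Set.image_image]
      have he : (k+2) - 2*i + 1 = ((k+1) - 2*i + 1) + 1 := by omega
      rw [he]
      congr 1
      funext x
      ring
    rw [Set.iUnion₂_congr shift]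
    rcases Nat.even_or_odd k with ⟨a, rfl⟩ | ⟨a, rfl⟩
    · have h1 : (a+a+1)/2 = a := by omega
      have h2 : (a+a+2)/2 = a+1 := by omega
      rw [h1, h2]
      rw [Set.union_assoc]
      rw [show a+a+1 = 2*a+1 from by ring, show a+a+2 = 2*a+2 from by ring,
        gs_tail_split q hq a]
      rw [← Set.union_assoc]
      congr 1
      have hins : Finset.Icc 1 (a+1) = insert (a+1) (Finset.Icc 1 a) := by
        ext z; simp [Finset.mem_Icc]; omega
      rw [hins, Finset.set_biUnion_insert]
      rw [show 2*a+2 - 2*(a+1) + 1 = 1 from by omega]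
      rw [Set.union_comm]
    · have h1 : (2*a+1+1)/2 = a+1 := by omega
      have h2 : (2*a+1+2)/2 = a+1 := by omega
      rw [h1, h2, Set.union_assoc,
        show (2*a+1)+1 = 2*a+2 from by ring, show (2*a+1)+2 = 2*a+3 from by ring,
        gs_tail_odd q hq a]

end GSaux

/-- `Λ^m` is the disjoint union of the `q^{m-2i+1}·A_i`,
`i = 1, …, ⌊m/2⌋`, and the tail `{j : j ≥ c_m}`. -/
theorem stmt2 (q : ℕ) (hq : 2 ≤ q) (m : ℕ) (hm : 1 ≤ m) :
    GSsemigroup q m =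
      (⋃ i ∈ Finset.Icc 1 (m / 2), (fun x => q ^ (m - 2 * i + 1) * x) '' gsA q i) ∪
        {j : ℕ | gsC q m ≤ j} ∧
    (∀ i j : ℕ, 1 ≤ i → i < j → j ≤ m / 2 →
      Disjoint ((fun x => q ^ (m - 2 * i + 1) * x) '' gsA q i)
        ((fun x => q ^ (m - 2 * j + 1) * x) '' gsA q j)) ∧
    (∀ i : ℕ, 1 ≤ i → i ≤ m / 2 →
      Disjoint ((fun x => q ^ (m - 2 * i + 1) * x) '' gsA q i) {j : ℕ | gsC q m ≤ j}) := by
  refine ⟨gs_key q hq m hm, fun i j h1 hij hj => gs_disj_pair q m i j hq h1 hij hj,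
    fun i h1 hi => gs_disj_tail q m i hq h1 hi⟩
end

section
/- The sets q^{m−2i+1}·A_i for i = 1, …, ⌊m/2⌋ are pairwise disjoint; specifically, max(q^{m−2i+1}·A_i) = q^m − q^{m−i} − q^{m−2i+1} is strictly less than min(q^{m−2(i+1)+1}·A_{i+1}) = q^m − q^{m−i}. -/
lemma gs_scale_max (q m i : ℕ) (hq : 2 ≤ q) (hi : 1 ≤ i) (hm : 2 * i ≤ m) :
    IsGreatest ((fun x => q ^ (m - 2 * i + 1) * x) '' gsA q i)
      (q ^ m - q ^ (m - i) - q ^ (m - 2 * i + 1)) := by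
  have e1 : q ^ (m - 2 * i + 1) * q ^ (2 * i - 1) = q ^ m := by
    rw [← pow_add]; congr 1; omega
  have e2 : q ^ (m - 2 * i + 1) * q ^ (i - 1) = q ^ (m - i) := by
    rw [← pow_add]; congr 1; omega
  have h1 : q ^ (i - 1) < q ^ i := Nat.pow_lt_pow_right hq (by omega)
  have h2 : q ^ i ≤ q ^ (2 * i - 1) := Nat.pow_le_pow_right (by omega) (by omega)
  have key : q ^ (m - 2 * i + 1) * (q ^ (2 * i - 1) - q ^ (i - 1) - 1)
      = q ^ m - q ^ (m - i) - q ^ (m - 2 * i + 1) := by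
    rw [show q ^ (2 * i - 1) - q ^ (i - 1) - 1 = q ^ (2 * i - 1) - (q ^ (i - 1) + 1) by omega,
      Nat.mul_sub, mul_add, mul_one, e1, e2]
    omega
  constructor
  · exact ⟨q ^ (2 * i - 1) - q ^ (i - 1) - 1, ⟨by omega, le_refl _⟩, key⟩
  · rintro y ⟨x, ⟨hx1, hx2⟩, rfl⟩
    simp only
    rw [← key]
    exact Nat.mul_le_mul_left _ hx2

lemma gs_scale_min (q m i : ℕ) (hq : 2 ≤ q) (hi : 1 ≤ i) (hm : 2 * i ≤ m) :
    IsLeast ((fun x => q ^ (m - 2 * i + 1) * x) '' gsA q i)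
      (q ^ m - q ^ (m - i + 1)) := by
  have e1 : q ^ (m - 2 * i + 1) * q ^ (2 * i - 1) = q ^ m := by
    rw [← pow_add]; congr 1; omega
  have e3 : q ^ (m - 2 * i + 1) * q ^ i = q ^ (m - i + 1) := by
    rw [← pow_add]; congr 1; omega
  have h1 : q ^ (i - 1) < q ^ i := Nat.pow_lt_pow_right hq (by omega)
  have h2 : q ^ i ≤ q ^ (2 * i - 1) := Nat.pow_le_pow_right (by omega) (by omega)
  have key : q ^ (m - 2 * i + 1) * (q ^ (2 * i - 1) - q ^ i)
      = q ^ m - q ^ (m - i + 1) := by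
    rw [Nat.mul_sub, e1, e3]
  constructor
  · exact ⟨q ^ (2 * i - 1) - q ^ i, ⟨le_refl _, by omega⟩, key⟩
  · rintro y ⟨x, ⟨hx1, hx2⟩, rfl⟩
    simp only
    rw [← key]
    exact Nat.mul_le_mul_left _ hx1

/-- the sets `q^{m-2i+1}·A_i`, `i = 1, …, ⌊m/2⌋`, are pairwise disjoint;
specifically `max(q^{m-2i+1}·A_i) = q^m - q^{m-i} - q^{m-2i+1}` is strictly less than
`min(q^{m-2(i+1)+1}·A_{i+1}) = q^m - q^{m-i}`. -/
theorem stmt3 (q : ℕ) (hq : 2 ≤ q) (m : ℕ) (hm : 1 ≤ m) :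
    (∀ i j : ℕ, 1 ≤ i → i < j → j ≤ m / 2 →
      Disjoint ((fun x => q ^ (m - 2 * i + 1) * x) '' gsA q i)
        ((fun x => q ^ (m - 2 * j + 1) * x) '' gsA q j)) ∧
    (∀ i : ℕ, 1 ≤ i → i + 1 ≤ m / 2 →
      IsGreatest ((fun x => q ^ (m - 2 * i + 1) * x) '' gsA q i)
        (q ^ m - q ^ (m - i) - q ^ (m - 2 * i + 1)) ∧
      IsLeast ((fun x => q ^ (m - 2 * (i + 1) + 1) * x) '' gsA q (i + 1))
        (q ^ m - q ^ (m - i)) ∧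
      q ^ m - q ^ (m - i) - q ^ (m - 2 * i + 1) < q ^ m - q ^ (m - i)) := by
  constructor
  · intro i j hi hij hj
    have hmi : 2 * i ≤ m := by
      have := Nat.div_mul_le_self m 2
      omega
    have hmj : 2 * j ≤ m := by
      have := Nat.div_mul_le_self m 2
      omega
    have hmax := (gs_scale_max q m i hq hi hmi).2
    have hmin := (gs_scale_min q m j hq (by omega) hmj).2
    rw [Set.disjoint_left]
    intro x hxi hxj
    have hA : x ≤ q ^ m - q ^ (m - i) - q ^ (m - 2 * i + 1) := hmax hxi
    have hB : q ^ m - q ^ (m - j + 1) ≤ x := hmin hxj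
    have f1 : q ^ (m - j + 1) ≤ q ^ (m - i) := Nat.pow_le_pow_right (by omega) (by omega)
    have f2 : q ^ (m - i) < q ^ m := Nat.pow_lt_pow_right hq (by omega)
    have f3 : 1 ≤ q ^ (m - 2 * i + 1) := Nat.one_le_pow _ _ (by omega)
    omega
  · intro i hi h1
    have hmi : 2 * i ≤ m := by
      have := Nat.div_mul_le_self m 2
      omega
    have hmi1 : 2 * (i + 1) ≤ m := by
      have := Nat.div_mul_le_self m 2
      omega
    have hmin := gs_scale_min q m (i + 1) hq (by omega) hmi1
    rw [show m - (i + 1) + 1 = m - i by omega] at hmin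
    have f2 : q ^ (m - i) < q ^ m := Nat.pow_lt_pow_right hq (by omega)
    have f3 : 1 ≤ q ^ (m - 2 * i + 1) := Nat.one_le_pow _ _ (by omega)
    exact ⟨gs_scale_max q m i hq hi hmi, hmin, by omega⟩
end

section
/- The number of gaps (genus) of Λ^m is g_m = (q^⌊(m+1)/2⌋ − 1)(q^⌈(m−1)/2⌉ − 1). -/
lemma gs_conductor (q m : ℕ) (hm : 1 ≤ m) (n : ℕ) (hn : gsC q m ≤ n) :
    n ∈ GSsemigroup q m := by
  match m, hm with
  | 1, _ => simp [GSsemigroup]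
  | (t+2), _ =>
    refine Or.inr ?_
    simpa [gsC, show t + 2 + 1 = t + 3 by omega] using hn

lemma gs_compl_subset (q m : ℕ) (hm : 1 ≤ m) :
    (GSsemigroup q m)ᶜ ⊆ Set.Iio (gsC q m) := fun n hn => by
  by_contra h
  exact hn (gs_conductor q m hm n (not_lt.mp (by simpa using h)))

lemma gs_count (q m N : ℕ) (hm : 1 ≤ m) (hN : gsC q m ≤ N)
    (IH : (GSsemigroup q m)ᶜ.ncard = gsG q m) :
    {x | x ∈ GSsemigroup q m ∧ x < N}.ncard = N - gsG q m := by
  have hsub : (GSsemigroup q m)ᶜ ⊆ Set.Iio N :=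
    (gs_compl_subset q m hm).trans (fun x hx => lt_of_lt_of_le hx hN)
  have heq : {x | x ∈ GSsemigroup q m ∧ x < N} = Set.Iio N \ (GSsemigroup q m)ᶜ := by
    ext x
    simp only [Set.mem_setOf_eq, Set.mem_diff, Set.mem_Iio, Set.mem_compl_iff, not_not]
    tauto
  rw [heq, Set.ncard_diff hsub ((Set.finite_Iio N).subset hsub), IH]
  congr 1
  simp [Set.ncard_eq_toFinset_card']

lemma gs_step (q : ℕ) (hq : 2 ≤ q) (m : ℕ)
    (IH : (GSsemigroup q (m+1))ᶜ.ncard = gsG q (m+1)) :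
    (GSsemigroup q (m+2))ᶜ.ncard = gsG q (m+2) := by
  have hq0 : 0 < q := by omega
  set N := q ^ (m+1) - q ^ ((m+1)/2) with hNdef
  have hf : (m+3)/2 = (m+1)/2 + 1 := by omega
  have hpow : q ^ ((m+1)/2) ≤ q ^ (m+1) :=
    Nat.pow_le_pow_right hq0 (by omega)
  have hc : gsC q (m+2) = q * N := by
    rw [hNdef, gsC, Nat.mul_sub, ← pow_succ', ← pow_succ',
      show m + 2 + 1 = m + 3 by omega, hf]
  have hset : (GSsemigroup q (m+2))ᶜ
      = Set.Iio (gsC q (m+2)) \ ((fun x => q * x) '' GSsemigroup q (m+1)) := by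
    ext x
    simp only [GSsemigroup, Set.mem_compl_iff, Set.mem_union, Set.mem_setOf_eq,
      Set.mem_diff, Set.mem_Iio, not_or, not_le, gsC,
      show m + 2 + 1 = m + 3 by omega]
    tauto
  have himg : ((fun x => q * x) '' GSsemigroup q (m+1)) ∩ Set.Iio (gsC q (m+2))
      = (fun x => q * x) '' {x | x ∈ GSsemigroup q (m+1) ∧ x < N} := by
    ext i
    constructor
    · rintro ⟨⟨x, hx, rfl⟩, hi⟩
      refine ⟨x, ⟨hx, ?_⟩, rfl⟩
      rw [Set.mem_Iio, hc] at hi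
      exact lt_of_mul_lt_mul_left hi (Nat.zero_le q)
    · rintro ⟨x, ⟨hx, hxN⟩, rfl⟩
      exact ⟨⟨x, hx, rfl⟩, by rw [Set.mem_Iio, hc]; exact Nat.mul_lt_mul_of_le_of_lt (le_refl q) hxN hq0⟩
  have hCN : gsC q (m+1) ≤ N := by
    rw [hNdef, gsC]
    exact Nat.sub_le_sub_left (Nat.pow_le_pow_right hq0 (by omega)) _
  have hcount : {x | x ∈ GSsemigroup q (m+1) ∧ x < N}.ncard = N - gsG q (m+1) :=
    gs_count q (m+1) N (by omega) hCN IH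
  have hinj : Function.Injective (fun x : ℕ => q * x) := mul_right_injective₀ hq0.ne'
  have hmain : (GSsemigroup q (m+2))ᶜ.ncard = gsC q (m+2) - (N - gsG q (m+1)) := by
    rw [hset, ← Set.diff_inter_self_eq_diff, Set.ncard_diff Set.inter_subset_right
      ((Set.finite_Iio _).subset Set.inter_subset_right), himg, Set.ncard_image_of_injective _ hinj, hcount]
    congr 1
    simp [Set.ncard_eq_toFinset_card']
  have hgN : gsG q (m+1) ≤ N ∧ gsG q (m+2) + N = gsC q (m+2) + gsG q (m+1) := by
    rcases Nat.even_or_odd m with ⟨k, hk⟩ | ⟨k, hk⟩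
    · subst hk
      have e1 : q ^ (k+k+1) = q ^ k * q ^ (k+1) := by ring
      have e2 : q ^ (k+k+2) = q ^ (k+1) * q ^ (k+1) := by ring
      simp only [hNdef, gsG, gsC, show (k+k+1+1)/2 = k+1 by omega,
        show (k+k+2)/2 = k+1 by omega, show (k+k+1)/2 = k by omega,
        show (k+k+2+1)/2 = k+1 by omega, e1, e2]
      have ha : 1 ≤ q ^ k := Nat.one_le_pow _ _ hq0
      have hb : 1 ≤ q ^ (k+1) := Nat.one_le_pow _ _ hq0
      have hab : q ^ k ≤ q ^ k * q ^ (k+1) := Nat.le_mul_of_pos_right _ hb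
      have hbb : q ^ (k+1) ≤ q ^ (k+1) * q ^ (k+1) := Nat.le_mul_of_pos_right _ hb
      constructor
      · zify [ha, hb, hab]
        nlinarith [ha, hb]
      · zify [ha, hb, hab, hbb]
        ring
    · subst hk
      have e1 : q ^ (2*k+1+1) = q ^ (k+1) * q ^ (k+1) := by ring
      have e2 : q ^ (2*k+1+2) = q ^ (k+1) * q ^ (k+2) := by ring
      simp only [hNdef, gsG, gsC, show (2*k+1+1+1)/2 = k+1 by omega,
        show (2*k+1+2)/2 = k+1 by omega, show (2*k+1+1)/2 = k+1 by omega,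
        show (2*k+1+2+1)/2 = k+2 by omega, e1, e2]
      have ha : 1 ≤ q ^ (k+1) := Nat.one_le_pow _ _ hq0
      have hb : 1 ≤ q ^ (k+2) := Nat.one_le_pow _ _ hq0
      have haa : q ^ (k+1) ≤ q ^ (k+1) * q ^ (k+1) := Nat.le_mul_of_pos_right _ ha
      have hab : q ^ (k+2) ≤ q ^ (k+1) * q ^ (k+2) := Nat.le_mul_of_pos_left _ ha
      constructor
      · zify [ha, hb, haa]
        nlinarith [ha, hb]
      · zify [ha, hb, haa, hab]
        ring
  omega

/-- the genus of `Λ^m` is `g_m = (q^⌊(m+1)/2⌋ - 1)(q^⌈(m-1)/2⌉ - 1)`. -/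
theorem stmt4 (q : ℕ) (hq : 2 ≤ q) (m : ℕ) (hm : 1 ≤ m) :
    Set.ncard (GSsemigroup q m)ᶜ = gsG q m := by
  obtain ⟨t, rfl⟩ : ∃ t, m = t + 1 := ⟨m - 1, by omega⟩
  induction t with
  | zero => simp [GSsemigroup, gsG]
  | succ n ih => exact gs_step q hq n (ih (by omega))
end

section
/- The cardinality of the disjoint union ⨆_{i=1}^{⌊m/2⌋} q^{m−2i+1}·A_i equals q^⌊m/2⌋ − 1, where A_i = {j ∈ ℕ₀ : q^{2i−1} − q^i ≤ j ≤ q^{2i−1} − q^{i−1} − 1}. -/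
lemma gs_pow_mul_sub (q a b c : ℕ) : q ^ a * (q ^ b - q ^ c) = q ^ (a + b) - q ^ (a + c) := by
  rw [Nat.mul_sub, ← pow_add, ← pow_add]

lemma gs_bounds (q m i : ℕ) (hq : 2 ≤ q) (hi : 1 ≤ i) (him : 2 * i ≤ m) :
    ∀ x ∈ (Finset.Icc (q ^ (2*i-1) - q^i) (q ^ (2*i-1) - q^(i-1) - 1)).image
      (fun x => q ^ (m - 2 * i + 1) * x),
      q ^ m - q ^ (m - i + 1) ≤ x ∧ x < q ^ m - q ^ (m - i) := by
  intro x hx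
  simp only [Finset.mem_image, Finset.mem_Icc] at hx
  obtain ⟨t, ⟨ht1, ht2⟩, rfl⟩ := hx
  have hq0 : 0 < q := by omega
  have e1 : m - 2*i + 1 + (2*i - 1) = m := by omega
  have e2 : m - 2*i + 1 + i = m - i + 1 := by omega
  have e3 : m - 2*i + 1 + (i - 1) = m - i := by omega
  constructor
  · calc q ^ m - q ^ (m - i + 1) = q ^ (m - 2*i + 1) * (q ^ (2*i-1) - q ^ i) := by
          rw [gs_pow_mul_sub, e1, e2]
      _ ≤ q ^ (m - 2*i + 1) * t := Nat.mul_le_mul_left _ ht1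
  · have hub : q ^ (m - 2*i + 1) * t ≤ q ^ (m - 2*i + 1) * (q ^ (2*i-1) - q^(i-1) - 1) :=
      Nat.mul_le_mul_left _ ht2
    have hdist : q ^ (m - 2*i + 1) * (q ^ (2*i-1) - q^(i-1) - 1)
        = (q ^ m - q ^ (m - i)) - q ^ (m - 2*i + 1) := by
      have : q ^ (2*i-1) - q^(i-1) - 1 = q ^ (2*i-1) - q^(i-1) - 1 * 1 := by ring_nf
      rw [this, Nat.mul_sub, Nat.mul_sub, mul_one, mul_one, ← pow_add, ← pow_add, e1, e3]
    have hp1 : q ^ (m - i) < q ^ m := Nat.pow_lt_pow_right (by omega) (by omega)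
    have hp2 : 1 ≤ q ^ (m - 2*i + 1) := Nat.one_le_pow _ _ hq0
    omega

lemma gs_geom (q : ℕ) (hq0 : 0 < q) (n : ℕ) :
    ∑ x ∈ Finset.Icc 1 n, (q ^ x - q ^ (x-1)) = q ^ n - 1 := by
  induction n with
  | zero => simp
  | succ n ih =>
    rw [Finset.sum_Icc_succ_top (by omega), ih]
    have h1 : q ^ n ≤ q ^ (n+1) := Nat.pow_le_pow_right hq0 (by omega)
    have h2 : 1 ≤ q ^ n := Nat.one_le_pow _ _ hq0
    simp only [Nat.add_sub_cancel]
    omega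

/-- `#(⨆_{i=1}^{⌊m/2⌋} q^{m-2i+1}·A_i) = q^⌊m/2⌋ - 1`. -/
theorem stmt5 (q : ℕ) (hq : 2 ≤ q) (m : ℕ) (hm : 1 ≤ m) :
    Set.ncard (⋃ i ∈ Finset.Icc 1 (m / 2), (fun x => q ^ (m - 2 * i + 1) * x) '' gsA q i) =
      q ^ (m / 2) - 1 := by
  classical
  have hq0 : 0 < q := by omega
  set n := m / 2 with hn
  have key : (⋃ i ∈ Finset.Icc 1 n, (fun x => q ^ (m - 2 * i + 1) * x) '' gsA q i)
      = ↑((Finset.Icc 1 n).biUnion fun i =>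
          (Finset.Icc (q ^ (2*i-1) - q^i) (q ^ (2*i-1) - q^(i-1) - 1)).image
            (fun x => q ^ (m - 2 * i + 1) * x)) := by
    ext x
    simp [gsA, Set.mem_Icc, and_assoc]
  rw [key, Set.ncard_coe_finset]
  have hdisj : ∀ i ∈ Finset.Icc 1 n, ∀ j ∈ Finset.Icc 1 n, i ≠ j →
      Disjoint ((Finset.Icc (q ^ (2*i-1) - q^i) (q ^ (2*i-1) - q^(i-1) - 1)).image
            (fun x => q ^ (m - 2 * i + 1) * x))
        ((Finset.Icc (q ^ (2*j-1) - q^j) (q ^ (2*j-1) - q^(j-1) - 1)).image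
            (fun x => q ^ (m - 2 * j + 1) * x)) := by
    have main : ∀ i j : ℕ, 1 ≤ i → i < j → j ≤ n →
        Disjoint ((Finset.Icc (q ^ (2*i-1) - q^i) (q ^ (2*i-1) - q^(i-1) - 1)).image
              (fun x => q ^ (m - 2 * i + 1) * x))
          ((Finset.Icc (q ^ (2*j-1) - q^j) (q ^ (2*j-1) - q^(j-1) - 1)).image
              (fun x => q ^ (m - 2 * j + 1) * x)) := by
      intro i j hi hij hjn
      rw [Finset.disjoint_left]
      intro x hxi hxj
      have him : 2 * i ≤ m := by omega
      have hjm : 2 * j ≤ m := by omega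
      have b1 := gs_bounds q m i hq hi him x hxi
      have b2 := gs_bounds q m j hq (by omega) hjm x hxj
      have hle : q ^ (m - j + 1) ≤ q ^ (m - i) := Nat.pow_le_pow_right hq0 (by omega)
      omega
    intro i hi j hj hij
    simp only [Finset.mem_Icc] at hi hj
    rcases Nat.lt_or_ge i j with h | h
    · exact main i j hi.1 h hj.2
    · exact (main j i hj.1 (by omega) hi.2).symm
  rw [Finset.card_biUnion hdisj]
  have hcard : ∀ i ∈ Finset.Icc 1 n,
      ((Finset.Icc (q ^ (2*i-1) - q^i) (q ^ (2*i-1) - q^(i-1) - 1)).image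
          (fun x => q ^ (m - 2 * i + 1) * x)).card = q ^ i - q ^ (i-1) := by
    intro i hi
    simp only [Finset.mem_Icc] at hi
    rw [Finset.card_image_of_injective _ (mul_right_injective₀ (pow_ne_zero _ (by omega)))]
    rw [Nat.card_Icc]
    have h1 : q ^ (i-1) ≤ q ^ i := Nat.pow_le_pow_right hq0 (by omega)
    have h2 : q ^ i ≤ q ^ (2*i-1) := Nat.pow_le_pow_right hq0 (by omega)
    have h3 : 1 ≤ q ^ (i-1) := Nat.one_le_pow _ _ hq0
    have h4 : q ^ (i-1) < q ^ (2*i-1) := Nat.pow_lt_pow_right (by omega) (by omega)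
    have key : ∀ A B C : ℕ, C ≤ B → B ≤ A → C < A →
        (A - C - 1 + 1) - (A - B) = B - C := by intro A B C u v w; omega
    exact key _ _ _ h1 h2 h4
  rw [Finset.sum_congr rfl hcard]
  exact gs_geom q hq0 n
end

section
/- Let λ be the enumeration of Λ^m (the increasing bijection ℕ₀ → Λ^m). Then λ(q^⌊m/2⌋ − 1) = c_m, i.e., the conductor c_m = q^m − q^⌊(m+1)/2⌋ is the (q^⌊m/2⌋ − 1)-th element of Λ^m. -/
open Classical
private theorem gs_conductor_mem (q m x : ℕ) (h : gsC q m ≤ x) : x ∈ GSsemigroup q m := by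
  match m with
  | 0 => trivial
  | 1 => trivial
  | (k+2) => exact Or.inr h

private theorem gs_count_s6 (q : ℕ) (hq : 2 ≤ q) :
    ∀ k, ((Finset.range (gsC q (k+1))).filter (· ∈ GSsemigroup q (k+1))).card
      = q ^ ((k+1)/2) - 1 := by
  intro k
  induction k with
  | zero =>
    have : gsC q 1 = 0 := by simp [gsC]
    simp [this]
  | succ k ih =>
    have e2 : k+1+1 = k+2 := rfl
    have e3 : k+2+1 = k+3 := rfl
    set d := q ^ (k+1) - q ^ ((k+1)/2) with hd
    have hq0 : 0 < q := by omega
    have hpow1 : q ^ ((k+1)/2) ≤ q ^ (k+1) := Nat.pow_le_pow_right hq0 (by omega)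
    have hpow2 : q ^ ((k+2)/2) ≤ q ^ (k+1) := Nat.pow_le_pow_right hq0 (by omega)
    have hpow3 : q ^ ((k+1)/2) ≤ q ^ ((k+2)/2) := Nat.pow_le_pow_right hq0 (by omega)
    have hpow4 : 1 ≤ q ^ ((k+1)/2) := Nat.one_le_pow _ _ hq0
    have hc : gsC q (k+2) = q * d := by
      have h1 : (k+3)/2 = (k+1)/2 + 1 := by omega
      rw [gsC, e3, h1, hd, Nat.mul_sub, pow_succ']
      ring_nf
    have hc' : gsC q (k+1) ≤ d := by
      simp only [gsC, e2, hd]; omega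
    have step1 : ((Finset.range (gsC q (k+2))).filter (· ∈ GSsemigroup q (k+2))).card
        = ((Finset.range d).filter (· ∈ GSsemigroup q (k+1))).card := by
      apply Finset.card_bij (fun x _ => q * x) ?_ ?_ ?_ |>.symm
      · intro a ha
        simp only [Finset.mem_filter, Finset.mem_range] at ha ⊢
        refine ⟨by rw [hc]; exact (Nat.mul_lt_mul_left hq0).mpr ha.1, Or.inl ⟨a, ha.2, rfl⟩⟩
      · intro a ha b hb h
        exact Nat.eq_of_mul_eq_mul_left hq0 h
      · intro b hb
        simp only [Finset.mem_filter, Finset.mem_range] at hb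
        rcases hb.2 with ⟨a, ha, rfl⟩ | h
        · refine ⟨a, ?_, rfl⟩
          simp only [Finset.mem_filter, Finset.mem_range]
          refine ⟨?_, ha⟩
          have := hb.1
          rw [hc] at this
          exact lt_of_mul_lt_mul_left this (by omega)
        · exact absurd hb.1 (by simp only [Set.mem_setOf_eq] at h; simp only [gsC, e3]; omega)
    have step2 : ((Finset.range d).filter (· ∈ GSsemigroup q (k+1))).card
        = ((Finset.range (gsC q (k+1))).filter (· ∈ GSsemigroup q (k+1))).card
          + (d - gsC q (k+1)) := by
      rw [Finset.range_eq_Ico, ← Finset.Ico_union_Ico_eq_Ico (Nat.zero_le _) hc',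
        Finset.filter_union, Finset.card_union_of_disjoint, ← Finset.range_eq_Ico]
      · congr 1
        rw [Finset.filter_true_of_mem, Nat.card_Ico]
        intro x hx
        exact gs_conductor_mem q (k+1) x (Finset.mem_Ico.mp hx).1
      · apply Finset.disjoint_filter_filter
        exact Finset.Ico_disjoint_Ico_consecutive 0 _ _
    rw [e2, step1, step2, ih]
    have hdc : d - gsC q (k+1) = q ^ ((k+2)/2) - q ^ ((k+1)/2) := by
      simp only [gsC, e2, hd]; omega
    rw [hdc]
    omega

private theorem stmt6' (q : ℕ) (hq : 2 ≤ q) (m : ℕ) (hm : 1 ≤ m) :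
    Nat.nth (fun n => n ∈ GSsemigroup q m) (q ^ (m / 2) - 1) = gsC q m := by
  obtain ⟨k, rfl⟩ : ∃ k, m = k + 1 := ⟨m - 1, by omega⟩
  have hcount : Nat.count (· ∈ GSsemigroup q (k+1)) (gsC q (k+1)) = q ^ ((k+1) / 2) - 1 := by
    rw [Nat.count_eq_card_filter_range]; exact gs_count_s6 q hq k
  rw [show (k+1)/2 = (k+1)/2 from rfl, ← hcount]
  exact Nat.nth_count (gs_conductor_mem q _ _ le_rfl)

/-- the conductor `c_m` is the `(q^⌊m/2⌋ - 1)`-th element of `Λ^m`. -/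
theorem stmt6 (q : ℕ) (hq : 2 ≤ q) (m : ℕ) (hm : 1 ≤ m) :
    gsEnum q m (q ^ (m / 2) - 1) = gsC q m := by
  exact stmt6' q hq m hm
end

section
/- Let λ be the enumeration of Λ^m. If 0 ≤ t < q^⌊m/2⌋ − 1 and l = ⌊log_q(t+1)⌋, then λ(t) = q^{m−2l−1}(c_{2l+1} + t + 1 − q^l), where c_{2l+1} = q^{2l+1} − q^{l+1}. -/
open scoped Classical


lemma gs_pw (q : ℕ) {a b : ℕ} (h : a = b) : q ^ a = q ^ b := by rw [h]

lemma gs_mem_of_conductor_le (q m n : ℕ) (hm : 1 ≤ m) (h : gsC q m ≤ n) :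
    n ∈ GSsemigroup q m := by
  match m, hm with
  | 1, _ => simp [GSsemigroup]
  | (k+2), _ => exact Or.inr h

lemma gs_mul_mem (q n x : ℕ) (hn : 1 ≤ n) (hx : x ∈ GSsemigroup q n) :
    q * x ∈ GSsemigroup q (n+1) := by
  match n, hn with
  | (k+1), _ => exact Or.inl ⟨x, hx, rfl⟩

lemma gs_pow_mul_mem (q n j x : ℕ) (hn : 1 ≤ n) (hx : x ∈ GSsemigroup q n) :
    q ^ j * x ∈ GSsemigroup q (n+j) := by
  induction j with
  | zero => simpa using hx
  | succ j ih =>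
      have : q ^ (j+1) * x = q * (q ^ j * x) := by ring
      rw [this]
      exact gs_mul_mem q (n+j) _ (by omega) ih

lemma gsC_mul_le (q : ℕ) (hq : 1 ≤ q) (n : ℕ) : q * gsC q n ≤ gsC q (n+1) := by
  unfold gsC
  rw [Nat.mul_sub]
  have h1 : q * q ^ n = q ^ (n+1) := (pow_succ' q n).symm
  have h2 : q * q ^ ((n+1)/2) = q ^ ((n+1)/2 + 1) := (pow_succ' q _).symm
  rw [h1, h2]
  exact Nat.sub_le_sub_left (Nat.pow_le_pow_right hq (by omega)) _

lemma gsC_pow_mul_le (q : ℕ) (hq : 1 ≤ q) (n j : ℕ) :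
    q ^ j * gsC q n ≤ gsC q (n+j) := by
  induction j with
  | zero => simp
  | succ j ih =>
      have : q ^ (j+1) * gsC q n = q * (q ^ j * gsC q n) := by ring
      rw [this]
      calc q * (q ^ j * gsC q n) ≤ q * gsC q (n+j) := Nat.mul_le_mul_left q ih
        _ ≤ gsC q (n+j+1) := gsC_mul_le q hq (n+j)

lemma gs_countA (q : ℕ) (hq : 2 ≤ q) (k N : ℕ) (hN : q * N ≤ gsC q (k+2)) :
    Nat.count (· ∈ GSsemigroup q (k+2)) (q*N) = Nat.count (· ∈ GSsemigroup q (k+1)) N := by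
  have hq0 : 0 < q := by omega
  rw [Nat.count_eq_card_filter_range, Nat.count_eq_card_filter_range]
  apply Finset.card_bij' (fun y _ => y / q) (fun x _ => q * x)
  · intro y hy
    simp only [Finset.mem_filter, Finset.mem_range] at hy ⊢
    obtain ⟨hy1, hy2⟩ := hy
    rcases hy2 with ⟨x, hx, hxy⟩ | hc
    · simp only at hxy
      subst hxy
      rw [Nat.mul_div_cancel_left _ hq0]
      exact ⟨(Nat.mul_lt_mul_left hq0).mp hy1, hx⟩
    · exfalso
      have : gsC q (k+2) ≤ y := hc
      omega
  · intro x hx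
    simp only [Finset.mem_filter, Finset.mem_range] at hx ⊢
    exact ⟨(Nat.mul_lt_mul_left hq0).mpr hx.1, Or.inl ⟨x, hx.2, rfl⟩⟩
  · intro y hy
    simp only [Finset.mem_filter, Finset.mem_range] at hy
    obtain ⟨hy1, hy2⟩ := hy
    rcases hy2 with ⟨x, hx, hxy⟩ | hc
    · simp only at hxy
      subst hxy
      rw [Nat.mul_div_cancel_left _ hq0]
    · exfalso; have : gsC q (k+2) ≤ y := hc; omega
  · intro x hx
    rw [Nat.mul_div_cancel_left _ hq0]

lemma gs_countIter (q : ℕ) (hq : 2 ≤ q) (n w j : ℕ) (hn : 1 ≤ n)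
    (hw : q * w ≤ gsC q (n+1)) :
    Nat.count (· ∈ GSsemigroup q (n+j)) (q ^ j * w) = Nat.count (· ∈ GSsemigroup q n) w := by
  induction j with
  | zero => simp
  | succ j ih =>
      have h1 : q ^ (j+1) * w = q * (q ^ j * w) := by ring
      have h2 : q * (q ^ j * w) ≤ gsC q (n+j+1) := by
        have h3 : q * (q ^ j * w) = q ^ j * (q * w) := by ring
        rw [h3]
        calc q ^ j * (q * w) ≤ q ^ j * gsC q (n+1) := Nat.mul_le_mul_left _ hw
          _ ≤ gsC q (n+1+j) := gsC_pow_mul_le q (by omega) (n+1) j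
          _ = gsC q (n+j+1) := by rw [show n+1+j = n+j+1 from by omega]
      have hkey : n + (j+1) = (n - 1 + j) + 2 := by omega
      rw [h1, hkey]
      have h4 := gs_countA q hq (n - 1 + j) (q ^ j * w) (by rw [← hkey]; exact h2)
      rw [h4, show n - 1 + j + 1 = n + j from by omega]
      exact ih

lemma gs_count_cond_add (q m s : ℕ) (hm : 1 ≤ m) :
    Nat.count (· ∈ GSsemigroup q m) (gsC q m + s)
      = Nat.count (· ∈ GSsemigroup q m) (gsC q m) + s := by
  induction s with
  | zero => simp
  | succ s ih =>
      have h : gsC q m + (s+1) = (gsC q m + s) + 1 := by omega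
      rw [h, Nat.count_succ, ih,
        if_pos (gs_mem_of_conductor_le q m _ hm (by omega))]
      omega

lemma gs_count_c_odd (q : ℕ) (hq : 2 ≤ q) (l : ℕ) :
    Nat.count (· ∈ GSsemigroup q (2*l+1)) (gsC q (2*l+1)) = q ^ l - 1 := by
  induction l with
  | zero =>
      have h : gsC q 1 = 0 := by simp [gsC]
      simp [h]
  | succ l ih =>
      have key : ∀ a b : ℕ, q * (q ^ a - q ^ b) = q ^ (a+1) - q ^ (b+1) := fun a b => by
        rw [Nat.mul_sub, ← pow_succ', ← pow_succ']
      have c3 : gsC q (2*l+1+2) = q ^ (2*l+1+2) - q ^ (l+2) := by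
        show q ^ (2*l+1+2) - q ^ ((2*l+1+2+1)/2) = _
        rw [gs_pw q (show (2*l+1+2+1)/2 = l+2 from by omega)]
      have c2 : gsC q (2*l+2) = q ^ (2*l+2) - q ^ (l+1) := by
        show q ^ (2*l+2) - q ^ ((2*l+2+1)/2) = _
        rw [gs_pw q (show (2*l+2+1)/2 = l+1 from by omega)]
      have c1 : gsC q (2*l+1) = q ^ (2*l+1) - q ^ (l+1) := by
        show q ^ (2*l+1) - q ^ ((2*l+1+1)/2) = _
        rw [gs_pw q (show (2*l+1+1)/2 = l+1 from by omega)]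
      have e1 : gsC q (2*l+1+2) = q * gsC q (2*l+2) := by
        rw [c3, c2, key, gs_pw q (show 2*l+1+2 = 2*l+2+1 from by omega),
          gs_pw q (show l+2 = l+1+1 from by omega)]
      have e2 : 2*(l+1)+1 = 2*l+1+2 := by ring
      rw [e2, e1, gs_countA q hq (2*l+1) _ (le_of_eq e1.symm)]
      have e3 : gsC q (2*l+2) = q * (q ^ (2*l+1) - q ^ l) := by
        rw [c2, key, gs_pw q (show 2*l+2 = 2*l+1+1 from by omega),
          gs_pw q (show l+1 = l+1 from rfl)]
      rw [e3, gs_countA q hq (2*l) _ (by rw [← e3])]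
      have hp1 : q ^ l ≤ q ^ (l+1) := Nat.pow_le_pow_right (by omega) (by omega)
      have hp2 : q ^ (l+1) ≤ q ^ (2*l+1) := Nat.pow_le_pow_right (by omega) (by omega)
      have e4 : q ^ (2*l+1) - q ^ l = gsC q (2*l+1) + (q ^ (l+1) - q ^ l) := by
        rw [c1]; omega
      rw [e4, gs_count_cond_add q (2*l+1) _ (by omega), ih]
      have h0 : 1 ≤ q ^ l := Nat.one_le_pow _ _ (by omega)
      have hql : q ^ (l+1) = q * q ^ l := pow_succ' q l
      have h0' : q ^ l + q ^ l ≤ q ^ (l + 1) := by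
        rw [hql]; nlinarith [h0]
      omega


/-- for `0 ≤ t < q^⌊m/2⌋ - 1` and `l = ⌊log_q (t+1)⌋`,
`λ(t) = q^{m-2l-1} (c_{2l+1} + t + 1 - q^l)`. -/
theorem stmt8 (q : ℕ) (hq : 2 ≤ q) (m : ℕ) (hm : 1 ≤ m) (t : ℕ)
    (ht : t + 1 < q ^ (m / 2)) :
    gsEnum q m t =
      q ^ (m - 2 * Nat.log q (t + 1) - 1) *
        (gsC q (2 * Nat.log q (t + 1) + 1) + (t + 1 - q ^ (Nat.log q (t + 1)))) := by
  set l := Nat.log q (t + 1) with hl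
  have h1 : q ^ l ≤ t + 1 := Nat.pow_log_le_self q (by omega)
  have h2 : t + 1 < q ^ (l + 1) := Nat.lt_pow_succ_log_self (by omega) _
  have hlm : l + 1 ≤ m / 2 := by
    have hx : q ^ l < q ^ (m / 2) := lt_of_le_of_lt h1 ht
    have := (Nat.pow_lt_pow_iff_right (by omega : 1 < q)).mp hx
    omega
  have hm2 : 2 * l + 2 ≤ m := by omega
  obtain ⟨s, hst⟩ : ∃ s, t + 1 - q ^ l = s := ⟨_, rfl⟩
  have hts : t + 1 = q ^ l + s := by omega
  obtain ⟨j, hjm⟩ : ∃ j, m - 2 * l - 1 = j := ⟨_, rfl⟩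
  have hmj : m = 2 * l + 1 + j := by omega
  have hj1 : 1 ≤ j := by omega
  have hcodd : gsC q (2*l+1) = q ^ (2*l+1) - q ^ (l+1) := by
    show q ^ (2*l+1) - q ^ ((2*l+1+1)/2) = _
    rw [gs_pw q (show (2*l+1+1)/2 = l+1 from by omega)]
  have hceven : gsC q (2*l+1+1) = q ^ (2*l+1+1) - q ^ (l+1) := by
    show q ^ (2*l+1+1) - q ^ ((2*l+1+1+1)/2) = _
    rw [gs_pw q (show (2*l+1+1+1)/2 = l+1 from by omega)]
  have hA : q ^ (2*l+1+1) = q * q ^ (2*l+1) := pow_succ' q _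
  have hB : q ^ (l+1) = q * q ^ l := pow_succ' q _
  have hp2 : q ^ (l+1) ≤ q ^ (2*l+1) := Nat.pow_le_pow_right (by omega) (by omega)
  have hsB : s ≤ q ^ (l+1) - q ^ l := by omega
  have hmul2 : q * (q ^ (l+1) - q ^ l) = q * q ^ (l+1) - q ^ (l+1) := by
    rw [Nat.mul_sub]; congr 1; rw [hB]
  have hmul3 : q * s ≤ q * q ^ (l+1) - q ^ (l+1) := by
    rw [← hmul2]; exact Nat.mul_le_mul_left q hsB
  have h4 : q ^ (l+1) ≤ q * q ^ (l+1) := Nat.le_mul_of_pos_left _ (by omega)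
  have h5 : q * q ^ (l+1) ≤ q * q ^ (2*l+1) := Nat.mul_le_mul_left q hp2
  have hqw : q * (gsC q (2*l+1) + s) ≤ gsC q (2*l+1+1) := by
    rw [Nat.mul_add, hcodd, Nat.mul_sub, hceven, hA]
    omega
  have hwmem : gsC q (2*l+1) + s ∈ GSsemigroup q (2*l+1) :=
    gs_mem_of_conductor_le q _ _ (by omega) (Nat.le_add_right _ _)
  have hvmem : q ^ j * (gsC q (2*l+1) + s) ∈ GSsemigroup q (2*l+1+j) :=
    gs_pow_mul_mem q (2*l+1) j _ (by omega) hwmem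
  have hcnt : Nat.count (· ∈ GSsemigroup q (2*l+1+j)) (q ^ j * (gsC q (2*l+1) + s)) = t := by
    rw [gs_countIter q hq (2*l+1) _ j (by omega) hqw,
      gs_count_cond_add q (2*l+1) s (by omega), gs_count_c_odd q hq l]
    have h0 : 1 ≤ q ^ l := Nat.one_le_pow _ _ (by omega)
    omega
  have hnth := Nat.nth_count (p := (· ∈ GSsemigroup q (2*l+1+j))) hvmem
  rw [hcnt] at hnth
  rw [hst, hjm, hmj]
  exact hnth
end

section
/- Let λ be the enumeration of Λ^m and k ≥ 0 an integer. If k ≥ c_m then λ^{-1}(⌊k⌋_{Λ^m}) = k − g_m, and if k < c_m then λ^{-1}(⌊k⌋_{Λ^m}) = q^{l−1} − 1 + ⌊k / q^{m−2l+1}⌋ − c_{2l−1}, where l = m + 1 − ⌈log_q(q^m − k)⌉. -/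
open Finset
attribute [local instance] Classical.propDecidable

noncomputable def gsF (q m k : ℕ) : Finset ℕ :=
  (Finset.range k).filter (fun n => n ∈ GSsemigroup q m)

lemma zero_mem (q : ℕ) : ∀ m, 0 ∈ GSsemigroup q m
  | 0 => Set.mem_univ 0
  | 1 => Set.mem_univ 0
  | (m+2) => Or.inl ⟨0, zero_mem q (m+1), by simp⟩

lemma mem_of_c_le (q : ℕ) : ∀ m x, gsC q m ≤ x → x ∈ GSsemigroup q m
  | 0, x, _ => Set.mem_univ x
  | 1, x, _ => Set.mem_univ x
  | (m+2), x, h => Or.inr (by simpa [gsC] using h)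

lemma gsLinv_eq (q m x : ℕ) : gsLinv q m x = (gsF q m x).card := by
  rw [gsLinv, show {y ∈ GSsemigroup q m | y < x} = ↑(gsF q m x) by
    ext y; simp [gsF, and_comm], Set.ncard_coe_finset]

lemma floor_mem (q m k : ℕ) : gsFloor q m k ∈ GSsemigroup q m ∧ gsFloor q m k ≤ k := by
  have hne : {x ∈ GSsemigroup q m | x ≤ k}.Nonempty := ⟨0, zero_mem q m, Nat.zero_le k⟩
  have hbdd : BddAbove {x ∈ GSsemigroup q m | x ≤ k} := ⟨k, fun x hx => hx.2⟩
  exact Nat.sSup_mem hne hbdd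

lemma le_floor (q m k y : ℕ) (hy : y ∈ GSsemigroup q m) (hyk : y ≤ k) : y ≤ gsFloor q m k :=
  le_csSup ⟨k, fun _ hx => hx.2⟩ ⟨hy, hyk⟩

lemma linv_floor (q m k : ℕ) : gsLinv q m (gsFloor q m k) + 1 = (gsF q m (k+1)).card := by
  rw [gsLinv_eq]
  have h1 : gsF q m (k+1) = insert (gsFloor q m k) (gsF q m (gsFloor q m k)) := by
    ext y
    simp only [gsF, mem_filter, mem_range, mem_insert, Nat.lt_succ_iff]
    constructor
    · rintro ⟨hyk, hy⟩
      rcases eq_or_ne y (gsFloor q m k) with h | h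
      · exact Or.inl h
      · exact Or.inr ⟨lt_of_le_of_ne (le_floor q m k y hy hyk) h, hy⟩
    · rintro (rfl | ⟨h1, h2⟩)
      · exact ⟨(floor_mem q m k).2, (floor_mem q m k).1⟩
      · exact ⟨le_trans (le_of_lt h1) (floor_mem q m k).2, h2⟩
  rw [h1, card_insert_of_notMem (by simp [gsF])]

lemma cnt_univ (q k : ℕ) : (gsF q 1 k).card = k := by
  simp [gsF, GSsemigroup]

lemma cnt_succ (q m k : ℕ) (h : k ∈ GSsemigroup q m) :
    (gsF q m (k+1)).card = (gsF q m k).card + 1 := by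
  rw [gsF, gsF, Finset.range_add_one, filter_insert, if_pos h,
    card_insert_of_notMem (by simp)]

lemma cnt_rec (q m k : ℕ) (hq : 0 < q) (hk : k < gsC q (m+2)) :
    (gsF q (m+2) (k+1)).card = (gsF q (m+1) (k/q + 1)).card := by
  have himg : gsF q (m+2) (k+1) = (gsF q (m+1) (k/q + 1)).image (fun x => q * x) := by
    ext y
    simp only [gsF, mem_filter, mem_range, Nat.lt_succ_iff, Finset.mem_image]
    constructor
    · rintro ⟨hyk, hy⟩
      rcases hy with ⟨x, hx, rfl⟩ | hy
      · exact ⟨x, ⟨by rw [Nat.le_div_iff_mul_le hq, mul_comm]; exact hyk, hx⟩, rfl⟩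
      · exact absurd (le_trans (by simpa [gsC] using hy) hyk) (not_le.2 hk)
    · rintro ⟨x, ⟨hx1, hx2⟩, rfl⟩
      refine ⟨?_, Or.inl ⟨x, hx2, rfl⟩⟩
      rw [mul_comm]
      exact (Nat.le_div_iff_mul_le hq).1 hx1
  rw [himg, card_image_of_injective _ fun a b h => Nat.eq_of_mul_eq_mul_left hq h]

lemma gsG_step (q m : ℕ) (hq : 1 ≤ q) :
    gsG q (m+2) = (q-1) * (q^(m+1) - q^((m+1)/2)) + gsG q (m+1) := by
  obtain ⟨t, rfl | rfl⟩ := Nat.even_or_odd' m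
  · simp only [gsG, show (2*t+2+1)/2 = t+1 by omega, show (2*t+2)/2 = t+1 by omega,
      show (2*t+1+1)/2 = t+1 by omega, show (2*t+1)/2 = t by omega]
    have h1 : 1 ≤ q ^ t := Nat.one_le_pow _ _ (by omega)
    have h2 : 1 ≤ q ^ (t+1) := Nat.one_le_pow _ _ (by omega)
    have h3 : q ^ t ≤ q ^ (2*t+1) := Nat.pow_le_pow_right hq (by omega)
    zify [h1, h2, h3, hq]
    have e1 : (q:ℤ)^(t+1) = q^t * q := by rw [pow_succ]
    have e2 : (q:ℤ)^(2*t+1) = q^t * q^t * q := by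
      rw [show 2*t+1 = t+(t+1) by ring, pow_add, pow_succ]; ring
    rw [e1, e2]; ring
  · simp only [gsG, show (2*t+1+2+1)/2 = t+2 by omega, show (2*t+1+2)/2 = t+1 by omega,
      show (2*t+1+1+1)/2 = t+1 by omega, show (2*t+1+1)/2 = t+1 by omega]
    have h1 : 1 ≤ q ^ (t+1) := Nat.one_le_pow _ _ (by omega)
    have h2 : 1 ≤ q ^ (t+2) := Nat.one_le_pow _ _ (by omega)
    have h3 : q ^ (t+1) ≤ q ^ (2*t+2) := Nat.pow_le_pow_right hq (by omega)
    zify [h1, h2, h3, hq]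
    have e1 : (q:ℤ)^(t+2) = q^(t+1) * q := by rw [pow_succ]
    have e2 : (q:ℤ)^(2*t+2) = q^(t+1) * q^(t+1) := by rw [← pow_add]; ring_nf
    rw [e1, e2]; ring

lemma gsG_le_gsC (q m : ℕ) (hq : 1 ≤ q) : gsG q m ≤ gsC q m := by
  have hAB : q^((m+1)/2) * q^(m/2) = q^m := by rw [← pow_add]; congr 1; omega
  have hA : 1 ≤ q^((m+1)/2) := Nat.one_le_pow _ _ (by omega)
  have hB : 1 ≤ q^(m/2) := Nat.one_le_pow _ _ (by omega)
  have hAAB : q^((m+1)/2) ≤ q^m := by rw [← hAB]; exact Nat.le_mul_of_pos_right _ hB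
  rw [gsG, gsC, ← hAB]
  zify [hA, hB, Nat.le_mul_of_pos_right _ hB]
  nlinarith [hA, hB]

lemma cnt_conductor (q : ℕ) (hq : 2 ≤ q) :
    ∀ m, 1 ≤ m → ∀ k, gsC q m ≤ k + 1 → (gsF q m (k+1)).card = k + 1 - gsG q m := by
  intro m
  induction m with
  | zero => omega
  | succ n ih =>
    intro _ k hk
    match n, ih with
    | 0, _ =>
      rw [cnt_univ, show gsG q 1 = 0 by simp [gsG]]; omega
    | (n'+1), ih =>
      obtain ⟨C', hC'def⟩ : ∃ x, x = q^(n'+1) - q^((n'+1)/2) := ⟨_, rfl⟩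
      obtain ⟨c, hcdef⟩ : ∃ x, x = gsC q (n'+2) := ⟨_, rfl⟩
      rw [← hcdef] at hk
      have hqpow1 : q^((n'+1)/2) < q^(n'+1) := Nat.pow_lt_pow_right (by omega) (by omega)
      have hC'pos : 1 ≤ C' := by omega
      have hc' : c = q * C' := by
        rw [hcdef, hC'def, gsC, Nat.mul_sub, ← pow_succ', ← pow_succ']
        congr 2 <;> omega
      have hqC : q ≤ q * C' := Nat.le_mul_of_pos_right _ hC'pos
      have hcpos : 1 ≤ c := by omega
      have hbase : (gsF q (n'+2) (c-1+1)).card = c - gsG q (n'+2) := by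
        have hdiv : (c-1)/q = C' - 1 := by
          have h1 : q * (C'-1) = q * C' - q := by rw [Nat.mul_sub, mul_one]
          have h2 : c - 1 = q * (C'-1) + (q-1) := by omega
          rw [h2, Nat.mul_add_div (by omega), Nat.div_eq_of_lt (by omega)]; omega
        rw [cnt_rec q n' (c-1) (by omega) (by rw [← hcdef]; omega), hdiv,
          show C'-1+1 = C' by omega]
        have hCc : gsC q (n'+1) ≤ C' := by
          rw [gsC, hC'def]
          have : q^((n'+1)/2) ≤ q^((n'+1+1)/2) := Nat.pow_le_pow_right (by omega) (by omega)
          omega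
        have hih := ih (by omega) (C'-1) (by omega)
        rw [show C'-1+1 = C' by omega] at hih
        rw [hih]
        have hgle : gsG q (n'+1) ≤ gsC q (n'+1) := gsG_le_gsC q (n'+1) (by omega)
        have hstep := gsG_step q n' (by omega)
        rw [← hC'def] at hstep
        obtain ⟨R, hR⟩ : ∃ x, x = (q-1) * C' := ⟨_, rfl⟩
        rw [← hR] at hstep
        obtain ⟨P, hP⟩ : ∃ x, x = q * C' := ⟨_, rfl⟩
        have hRP : R + C' = P := by
          have h1 : C' ≤ q * C' := Nat.le_mul_of_pos_left _ (by omega)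
          have h2 : (q-1) * C' = q * C' - C' := Nat.sub_one_mul q C'
          rw [hR, hP]
          omega
        rw [← hP] at hc'
        clear hR hP hC'def hcdef hqpow1 hqC hdiv hCc
        omega
      have hext : ∀ j, (gsF q (n'+2) (c + j)).card = c + j - gsG q (n'+2) := by
        intro j
        induction j with
        | zero => simpa [show c - 1 + 1 = c by omega] using hbase
        | succ i hi =>
          rw [show c + (i+1) = (c+i) + 1 by ring,
            cnt_succ q (n'+2) (c+i) (mem_of_c_le q (n'+2) (c+i) (by rw [← hcdef]; omega)), hi]
          have hgle : gsG q (n'+2) ≤ gsC q (n'+2) := gsG_le_gsC q (n'+2) (by omega)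
          omega
      have hfin := hext (k + 1 - c)
      rw [show c + (k+1-c) = k+1 by omega] at hfin
      exact hfin

lemma cnt_iter (q : ℕ) (hq : 2 ≤ q) :
    ∀ d m k, 1 ≤ m → (∀ j, j < d → k / q^j < gsC q (m + d - j)) →
      (gsF q (m+d) (k+1)).card = (gsF q m (k/q^d + 1)).card := by
  intro d
  induction d with
  | zero => intro m k _ _; rw [pow_zero, Nat.div_one, Nat.add_zero]
  | succ d ihd =>
    intro m k hm hj
    obtain ⟨m', rfl⟩ : ∃ m', m = m' + 1 := ⟨m - 1, by omega⟩
    have h0 : k < gsC q (m' + 1 + (d + 1)) := by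
      have := hj 0 (by omega)
      simpa using this
    have step : (gsF q (m'+1+(d+1)) (k+1)).card = (gsF q (m'+1+d) (k/q + 1)).card := by
      have := cnt_rec q (m'+d) k (by omega) (by
        rw [show m'+d+2 = m'+1+(d+1) by ring]; exact h0)
      rw [show m'+d+2 = m'+1+(d+1) by ring, show m'+d+1 = m'+1+d by ring] at this
      exact this
    rw [step, ihd (m'+1) (k/q) (by omega) ?_, Nat.div_div_eq_div_mul, ← pow_succ']
    intro j hjd
    rw [Nat.div_div_eq_div_mul, ← pow_succ']
    have := hj (j+1) (by omega)
    rw [show m'+1+(d+1)-(j+1) = m'+1+d-j by omega] at this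
    exact this

lemma gs_expand (X Y : ℕ) (hX : 1 ≤ X) (hY : 1 ≤ Y) : (X-1)*(Y-1) + X + Y = X*Y + 1 := by
  obtain ⟨x, rfl⟩ : ∃ x, X = x + 1 := ⟨X - 1, by omega⟩
  obtain ⟨y, rfl⟩ : ∃ y, Y = y + 1 := ⟨Y - 1, by omega⟩
  simp only [Nat.add_sub_cancel]
  ring


/-- `λ⁻¹(⌊k⌋_{Λ^m}) = k - g_m` for `k ≥ c_m`, and
`λ⁻¹(⌊k⌋_{Λ^m}) = q^{l-1} - 1 + ⌊k / q^{m-2l+1}⌋ - c_{2l-1}` for `k < c_m`,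
where `l = m + 1 - ⌈log_q (q^m - k)⌉`. -/
theorem stmt11 (q : ℕ) (hq : 2 ≤ q) (m : ℕ) (hm : 1 ≤ m) (k : ℕ) :
    (gsC q m ≤ k → gsLinv q m (gsFloor q m k) = k - gsG q m) ∧
    (k < gsC q m → ∀ l : ℕ, l = m + 1 - Nat.clog q (q ^ m - k) →
      gsLinv q m (gsFloor q m k) =
        q ^ (l - 1) - 1 + k / q ^ (m - 2 * l + 1) - gsC q (2 * l - 1)) := by
  constructor
  · intro hk
    have h1 := linv_floor q m k
    have h2 := cnt_conductor q hq m hm k (by omega)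
    have hg : gsG q m ≤ gsC q m := gsG_le_gsC q m (by omega)
    omega
  · intro hk l hl
    have hq1 : 1 < q := by omega
    have hApos : q ≤ q^((m+1)/2) := by
      calc q = q^1 := (pow_one q).symm
      _ ≤ q^((m+1)/2) := Nat.pow_le_pow_right (by omega) (by omega)
    have hAm : q^((m+1)/2) ≤ q^m := Nat.pow_le_pow_right (by omega) (by omega)
    rw [gsC] at hk
    have hkqm : k < q^m := by omega
    have hn1 : q^((m+1)/2) < q^m - k := by omega
    obtain ⟨L, hL⟩ : ∃ x, x = Nat.clog q (q^m - k) := ⟨_, rfl⟩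
    rw [← hL] at hl
    have hnpos : 1 < q^m - k := by omega
    have hLle : L ≤ m := by
      rw [hL]
      exact (Nat.clog_le_iff_le_pow hq1).2 (by omega)
    have hLge : (m+1)/2 + 1 ≤ L := by
      by_contra hcon
      have ha := Nat.le_pow_clog hq1 (q^m - k)
      rw [← hL] at ha
      have hb : q^L ≤ q^((m+1)/2) := Nat.pow_le_pow_right (by omega) (by omega)
      omega
    have hl1 : 1 ≤ l := by omega
    have h2l : 2*l ≤ m := by omega
    have hlow : q^(m-l) < q^m - k := by
      have h := Nat.pow_pred_clog_lt_self hq1 hnpos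
      rw [← hL, Nat.pred_eq_sub_one, show L - 1 = m - l by omega] at h
      exact h
    have hhigh : q^m - k ≤ q^(m+1-l) := by
      have h := Nat.le_pow_clog hq1 (q^m - k)
      rw [← hL] at h
      rw [show m+1-l = L by omega]
      exact h
    obtain ⟨d, hd⟩ : ∃ x, x = m - (2*l-1) := ⟨_, rfl⟩
    have hside : ∀ j, j < d → k / q^j < gsC q (2*l-1+d-j) := by
      intro j hjd
      rw [show 2*l-1+d-j = m-j by omega, Nat.div_lt_iff_lt_mul (pow_pos (by omega) j)]
      have hE : gsC q (m-j) * q^j = q^m - q^((m-j+1)/2 + j) := by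
        rw [gsC, Nat.sub_mul, ← pow_add, ← pow_add, show m-j+j = m by omega]
      rw [hE]
      have hle : q^((m-j+1)/2 + j) ≤ q^(m-l) := Nat.pow_le_pow_right (by omega) (by omega)
      omega
    have hiter := cnt_iter q hq d (2*l-1) k (by omega) hside
    rw [show 2*l-1+d = m by omega] at hiter
    have hck : gsC q (2*l-1) * q^d ≤ k := by
      have hE : gsC q (2*l-1) * q^d = q^m - q^(m+1-l) := by
        rw [gsC, Nat.sub_mul, ← pow_add, ← pow_add, show 2*l-1+d = m by omega,
          show (2*l-1+1)/2 + d = m+1-l by omega]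
      rw [hE]
      omega
    have hck' : gsC q (2*l-1) ≤ k / q^d := (Nat.le_div_iff_mul_le (pow_pos (by omega) d)).2 hck
    have hcond := cnt_conductor q hq (2*l-1) (by omega) (k/q^d) (by omega)
    have hlf := linv_floor q m k
    rw [hiter, hcond] at hlf
    rw [show m - 2*l + 1 = d by omega]
    have hX : 1 ≤ q^l := Nat.one_le_pow _ _ (by omega)
    have hY : 1 ≤ q^(l-1) := Nat.one_le_pow _ _ (by omega)
    obtain ⟨A, hA⟩ : ∃ x, x = (q^l - 1) * (q^(l-1) - 1) := ⟨_, rfl⟩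
    obtain ⟨P, hP⟩ : ∃ x, x = q^l * q^(l-1) := ⟨_, rfl⟩
    have hg'eq : gsG q (2*l-1) = A := by
      rw [hA, gsG, show (2*l-1+1)/2 = l by omega, show (2*l-1)/2 = l-1 by omega]
    have hc'eq : gsC q (2*l-1) = P - q^l := by
      rw [hP, gsC, show (2*l-1+1)/2 = l by omega, ← pow_add, show l + (l-1) = 2*l-1 by omega]
    have hE1 : A + q^l + q^(l-1) = P + 1 := by
      rw [hA, hP]
      exact gs_expand _ _ hX hY
    rw [hg'eq] at hlf
    rw [hc'eq]
    rw [hc'eq] at hck'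
    omega
end

section
/- For k < c_m, the largest integer l such that q^{m−2l+1}·c_{2l−1} ≤ k is l = m + 1 − ⌈log_q(q^m − k)⌉, where c_{2l−1} = q^{2l−1} − q^l. -/
private lemma gs_prod_eq (q m l : ℕ) (hl : 1 ≤ l) (hlm : 2 * l ≤ m) :
    q ^ (m - 2 * l + 1) * gsC q (2 * l - 1) = q ^ m - q ^ (m + 1 - l) := by
  unfold gsC
  rw [show (2 * l - 1 + 1) / 2 = l by omega, Nat.mul_sub, ← pow_add, ← pow_add]
  congr 2 <;> omega

/-- for `k < c_m`, the largest `l ≥ 1` with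
`q^{m-2l+1} c_{2l-1} ≤ k` is `l = m + 1 - ⌈log_q (q^m - k)⌉`. -/
theorem stmt12 (q : ℕ) (hq : 2 ≤ q) (m : ℕ) (hm : 1 ≤ m) (k : ℕ) (hk : k < gsC q m) :
    IsGreatest {l : ℕ | 1 ≤ l ∧ q ^ (m - 2 * l + 1) * gsC q (2 * l - 1) ≤ k}
      (m + 1 - Nat.clog q (q ^ m - k)) := by
  have hq1 : 1 < q := hq
  set a := Nat.clog q (q ^ m - k) with ha
  have hc : gsC q m = q ^ m - q ^ ((m + 1) / 2) := rfl
  have hpow : q ^ ((m + 1) / 2) ≤ q ^ m := Nat.pow_le_pow_right (by omega) (by omega)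
  have hkm : k < q ^ m := by rw [hc] at hk; omega
  have ham : a ≤ m := (Nat.clog_le_iff_le_pow hq1).mpr (by omega)
  have hal : (m + 1) / 2 < a := by
    rw [ha, Nat.lt_clog_iff_pow_lt hq1]
    rw [hc] at hk; omega
  have hL2 : 2 * (m + 1 - a) ≤ m := by omega
  have hL1 : 1 ≤ m + 1 - a := by omega
  have hk2 : q ^ m - k ≤ q ^ a := Nat.le_pow_clog hq1 _
  constructor
  · refine ⟨hL1, ?_⟩
    rw [gs_prod_eq q m _ hL1 hL2, show m + 1 - (m + 1 - a) = a by omega]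
    omega
  · rintro l ⟨hl1, hl2⟩
    rcases eq_or_lt_of_le hl1 with h | h
    · omega
    · have hlm : 2 * l ≤ m := by
        by_contra hcon
        push_neg at hcon
        rw [show m - 2 * l + 1 = 1 by omega, pow_one] at hl2
        have e1 : gsC q (2 * l - 1) = q ^ (2 * l - 1) - q ^ l := by
          unfold gsC
          rw [show (2 * l - 1 + 1) / 2 = l by omega]
        rw [e1, Nat.mul_sub, ← pow_succ', ← pow_succ',
          show 2 * l - 1 + 1 = 2 * l by omega] at hl2
        have b1 : 2 * q ^ (2 * l - 1) ≤ q ^ (2 * l) := by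
          rw [show 2 * l = 2 * l - 1 + 1 by omega, pow_succ']
          exact Nat.mul_le_mul_right _ hq
        have b2 : q ^ (l + 1) ≤ q ^ (2 * l - 1) :=
          Nat.pow_le_pow_right (by omega) (by omega)
        have b3 : q ^ m ≤ q ^ (2 * l - 1) :=
          Nat.pow_le_pow_right (by omega) (by omega)
        omega
      rw [gs_prod_eq q m l hl1 hlm] at hl2
      have hale : a ≤ m + 1 - l := (Nat.clog_le_iff_le_pow hq1).mpr (by omega)
      omega
end

section
/- For any numerical semigroup Λ with conductor c, genus g, enumeration λ, and ν-sequence ν_i = #{j : λ_i − λ_j ∈ Λ}, one has ν_i = i − g + 1 for all i ≥ 2c − g. -/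
/-- for any numerical semigroup with conductor `c` and genus `g`,
`ν_i = i - g + 1` for all `i ≥ 2c - g`. -/
theorem stmt13 (Λ : Set ℕ) (h0 : 0 ∈ Λ) (hadd : ∀ a ∈ Λ, ∀ b ∈ Λ, a + b ∈ Λ)
    (hfin : Λᶜ.Finite) (c : ℕ) (hc : IsLeast {n : ℕ | ∀ k, n ≤ k → k ∈ Λ} c)
    (i : ℕ) (hi : 2 * c - Λᶜ.ncard ≤ i) :
    Set.ncard {j : ℕ | ∃ a ∈ Λ, Nat.nth (· ∈ Λ) j + a = Nat.nth (· ∈ Λ) i} =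
      i - Λᶜ.ncard + 1 := by
  classical
  set g := Λᶜ.ncard with hg
  have hinf : (setOf (· ∈ Λ)).Infinite := by
    apply Set.infinite_of_finite_compl
    exact hfin
  have hcmem : ∀ k, c ≤ k → k ∈ Λ := hc.1
  have hgap : ∀ x, x ∉ Λ → x < c := fun x hx => by
    by_contra h; exact hx (hcmem x (le_of_not_gt h))
  have hgc : g ≤ c := by
    have hsub : Λᶜ ⊆ Set.Iio c := fun x hx => hgap x hx
    calc g ≤ (Set.Iio c).ncard := Set.ncard_le_ncard hsub (Set.finite_Iio c)
      _ = c := by rw [← Finset.coe_Iio, Set.ncard_coe_finset, Nat.card_Iio]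
  have hgcard : g = hfin.toFinset.card := Set.ncard_eq_toFinset_card Λᶜ hfin
  have hcount : ∀ n, c ≤ n → Nat.count (· ∈ Λ) n = n - g := by
    intro n hn
    have h1 : Nat.count (· ∈ Λ) n = ((Finset.range n).filter (· ∈ Λ)).card :=
      Nat.count_eq_card_filter_range _ n
    have h2 : (Finset.range n).filter (fun x => ¬ x ∈ Λ) = hfin.toFinset := by
      ext x
      simp only [Finset.mem_filter, Finset.mem_range, Set.Finite.mem_toFinset,
        Set.mem_compl_iff]
      constructor
      · rintro ⟨-, hx⟩; exact hx
      · intro hx; exact ⟨lt_of_lt_of_le (hgap x hx) hn, hx⟩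
    have h3 := Finset.card_filter_add_card_filter_not
      (s := Finset.range n) (p := (· ∈ Λ))
    rw [h2, Finset.card_range] at h3
    omega
  have hnth : ∀ k, c ≤ k → Nat.nth (· ∈ Λ) k = k + g := by
    intro k hk
    have hmem : (k + g) ∈ Λ := hcmem _ (by omega)
    have h1 : Nat.nth (· ∈ Λ) (Nat.count (· ∈ Λ) (k + g)) = k + g :=
      Nat.nth_count hmem
    have h2 : Nat.count (· ∈ Λ) (k + g) = k := by
      rw [hcount _ (by omega)]; omega
    rwa [h2] at h1
  have hic : c ≤ i := by omega
  have hnthi : Nat.nth (· ∈ Λ) i = i + g := hnth i hic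
  have hmono : ∀ {a b : ℕ}, Nat.nth (· ∈ Λ) a ≤ Nat.nth (· ∈ Λ) b ↔ a ≤ b := by
    intro a b; exact Nat.nth_le_nth hinf
  set T : Set ℕ := {j | j ≤ i ∧ Nat.nth (· ∈ Λ) i - Nat.nth (· ∈ Λ) j ∉ Λ} with hT
  have hTsub : T ⊆ Set.Iic i := fun j hj => hj.1
  have hTfin : T.Finite := (Set.finite_Iic i).subset hTsub
  have hinj : Set.InjOn (fun j => Nat.nth (· ∈ Λ) i - Nat.nth (· ∈ Λ) j) T := by
    intro a ha b hb hab
    have h1 : Nat.nth (· ∈ Λ) a ≤ Nat.nth (· ∈ Λ) i := hmono.2 ha.1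
    have h2 : Nat.nth (· ∈ Λ) b ≤ Nat.nth (· ∈ Λ) i := hmono.2 hb.1
    have : Nat.nth (· ∈ Λ) a = Nat.nth (· ∈ Λ) b := by
      simp only at hab; omega
    exact Nat.nth_injective hinf this
  have himg : (fun j => Nat.nth (· ∈ Λ) i - Nat.nth (· ∈ Λ) j) '' T = Λᶜ := by
    ext h
    constructor
    · rintro ⟨j, hj, rfl⟩; exact hj.2
    · intro hh
      have hhc : h < c := hgap h hh
      set m := Nat.nth (· ∈ Λ) i - h with hm
      have hmbig : c ≤ m := by omega
      have hmmem : m ∈ Λ := hcmem m hmbig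
      have hjm : Nat.nth (· ∈ Λ) (Nat.count (· ∈ Λ) m) = m := Nat.nth_count hmmem
      refine ⟨Nat.count (· ∈ Λ) m, ⟨?_, ?_⟩, ?_⟩
      · have : Nat.count (· ∈ Λ) m = m - g := hcount m hmbig
        omega
      · rw [hjm]
        have heq : Nat.nth (· ∈ Λ) i - m = h := by omega
        rw [heq]; exact hh
      · simp only [hjm]; omega
  have hTcard : T.ncard = g := by
    rw [← Set.ncard_image_of_injOn hinj, himg]
  have hSeq : {j : ℕ | ∃ a ∈ Λ, Nat.nth (· ∈ Λ) j + a = Nat.nth (· ∈ Λ) i}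
      = Set.Iic i \ T := by
    ext j
    simp only [Set.mem_setOf_eq, Set.mem_diff, Set.mem_Iic, hT]
    constructor
    · rintro ⟨a, ha, hja⟩
      have hle : Nat.nth (· ∈ Λ) j ≤ Nat.nth (· ∈ Λ) i := by omega
      have hji : j ≤ i := hmono.1 hle
      refine ⟨hji, ?_⟩
      intro hcon
      have heq : Nat.nth (· ∈ Λ) i - Nat.nth (· ∈ Λ) j = a := by omega
      exact hcon.2 (heq ▸ ha)
    · rintro ⟨hji, hnot⟩
      have hle : Nat.nth (· ∈ Λ) j ≤ Nat.nth (· ∈ Λ) i := hmono.2 hji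
      have hin : Nat.nth (· ∈ Λ) i - Nat.nth (· ∈ Λ) j ∈ Λ := by
        by_contra hx
        exact hnot ⟨hji, hx⟩
      exact ⟨Nat.nth (· ∈ Λ) i - Nat.nth (· ∈ Λ) j, hin, by omega⟩
  rw [hSeq, Set.ncard_diff hTsub hTfin, hTcard]
  have hIic : (Set.Iic i).ncard = i + 1 := by
    rw [← Finset.coe_Iic, Set.ncard_coe_finset, Nat.card_Iic]
  rw [hIic]
  omega
end

section
/- Let m ≥ 2 and let i satisfy c_m − g_m < i ≤ 2c_m − g_m and q ∤ (i + g_m). Then ν^m_i = 2 + 2·(λ^m)^{-1}(⌊i + g_m − c_m − 1⌋_{Λ^m}), i.e., ν^m_i = 2·#{α ∈ Λ^m : α < λ^m_i − c_m}. -/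
open scoped Classical

section aux

variable {q : ℕ}

lemma gsMemOfLe : ∀ (m n : ℕ), gsC q m ≤ n → n ∈ GSsemigroup q m
  | 0, n, _ => Set.mem_univ n
  | 1, n, _ => Set.mem_univ n
  | (_+2), _, h => Set.mem_union_right _ h

lemma gsZero : ∀ m, 0 ∈ GSsemigroup q m
  | 0 => Set.mem_univ 0
  | 1 => Set.mem_univ 0
  | (k+2) => Set.mem_union_left _ ⟨0, gsZero (k+1), mul_zero q⟩

lemma gsSmall {k n : ℕ} (hn : n ∈ GSsemigroup q (k+2)) (h : n < gsC q (k+2)) :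
    ∃ x ∈ GSsemigroup q (k+1), q * x = n := by
  rcases hn with ⟨x, hx, hxn⟩ | hn
  · exact ⟨x, hx, hxn⟩
  · exact absurd (show gsC q (k+2) ≤ n from hn) (by omega)

lemma gsIneq (B C : ℕ) (hB : 1 ≤ B) (hC : 1 ≤ C) :
    (C-1)*(B-1) + B + C ≤ B*C + 1 := by
  zify [hB, hC]; nlinarith

lemma gsArith (hq : 2 ≤ q) (k : ℕ) :
    ∃ d : ℕ, gsC q (k+2) = q * d ∧ gsC q (k+1) ≤ d ∧
      d - gsG q (k+1) = gsC q (k+2) - gsG q (k+2) ∧ gsG q (k+2) ≤ gsC q (k+2) := by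
  have hq1 : 1 ≤ q := by omega
  rcases Nat.even_or_odd k with ⟨t, rfl⟩ | ⟨t, rfl⟩
  · -- k = t + t
    have ha : 1 ≤ q ^ t := Nat.one_le_pow _ _ (by omega)
    have hc2 : gsC q (t+t+2) = q^t*q*(q^t*q) - q^t*q := by
      unfold gsC
      rw [show (t+t+2+1)/2 = t+1 from by omega,
        show t+t+2 = (t+1)+(t+1) from by omega, pow_add, pow_succ]
    have hc1 : gsC q (t+t+1) = q^t*(q^t*q) - q^t*q := by
      unfold gsC
      rw [show (t+t+1+1)/2 = t+1 from by omega,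
        show t+t+1 = t+(t+1) from by omega, pow_add, pow_succ]
    have hg1 : gsG q (t+t+1) = (q^t*q-1)*(q^t-1) := by
      unfold gsG
      rw [show (t+t+1+1)/2 = t+1 from by omega, show (t+t+1)/2 = t from by omega, pow_succ]
    have hg2 : gsG q (t+t+2) = (q^t*q-1)*(q^t*q-1) := by
      unfold gsG
      rw [show (t+t+2+1)/2 = t+1 from by omega, show (t+t+2)/2 = t+1 from by omega, pow_succ]
    have s3 : 1 ≤ q^t*q := by nlinarith
    have s1 : q^t ≤ q^t*(q^t*q) := by nlinarith
    have s2 : q^t*q ≤ q^t*q*(q^t*q) := by nlinarith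
    have s4 : (q^t*q-1)*(q^t-1) + q^t ≤ q^t*(q^t*q) := by
      have h := gsIneq (q^t) (q^t*q) ha s3; omega
    have s5 : (q^t*q-1)*(q^t*q-1) + q^t*q ≤ q^t*q*(q^t*q) := by
      have h := gsIneq (q^t*q) (q^t*q) s3 s3; omega
    refine ⟨q^t*(q^t*q) - q^t, ?_, ?_, ?_, ?_⟩
    · rw [hc2]; zify [s1, s2]; ring
    · rw [hc1]; have : q^t ≤ q^t*q := by nlinarith
      omega
    · rw [hc2, hg1, hg2]; zify [s1, s2, s3, ha, show (q^t*q-1)*(q^t-1) ≤ q^t*(q^t*q) - q^t from by omega,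
        show (q^t*q-1)*(q^t*q-1) ≤ q^t*q*(q^t*q) - q^t*q from by omega]
      ring
    · rw [hc2, hg2]; omega
  · -- k = 2t+1
    have ha : 1 ≤ q ^ t := Nat.one_le_pow _ _ (by omega)
    have hc2 : gsC q (2*t+1+2) = q^t*q*(q^t*q)*q - q^t*q*q := by
      unfold gsC
      rw [show (2*t+1+2+1)/2 = t+1+1 from by omega,
        show 2*t+1+2 = (t+1)+(t+1)+1 from by omega]
      simp only [pow_add, pow_succ, pow_one, pow_zero, one_mul]
    have hc1 : gsC q (2*t+1+1) = q^t*q*(q^t*q) - q^t*q := by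
      unfold gsC
      rw [show (2*t+1+1+1)/2 = t+1 from by omega,
        show 2*t+1+1 = (t+1)+(t+1) from by omega, pow_add, pow_succ]
    have hg1 : gsG q (2*t+1+1) = (q^t*q-1)*(q^t*q-1) := by
      unfold gsG
      rw [show (2*t+1+1+1)/2 = t+1 from by omega, show (2*t+1+1)/2 = t+1 from by omega, pow_succ]
    have hg2 : gsG q (2*t+1+2) = (q^t*q*q-1)*(q^t*q-1) := by
      unfold gsG
      rw [show (2*t+1+2+1)/2 = t+1+1 from by omega, show (2*t+1+2)/2 = t+1 from by omega,
        pow_succ, pow_succ]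
    have s3 : 1 ≤ q^t*q := by
      calc 1 = 1*1 := rfl
      _ ≤ q^t*q := Nat.mul_le_mul ha (by omega)
    have s3' : 1 ≤ q^t*q*q := by
      calc 1 = 1*1 := rfl
      _ ≤ (q^t*q)*q := Nat.mul_le_mul s3 (by omega)
    have s1 : q^t*q ≤ q^t*q*(q^t*q) := Nat.le_mul_of_pos_right _ (by omega)
    have s2 : q^t*q*q ≤ q^t*q*(q^t*q)*q := Nat.mul_le_mul (Nat.le_mul_of_pos_right _ (by omega)) (le_refl q)
    have s4 : (q^t*q-1)*(q^t*q-1) + q^t*q ≤ q^t*q*(q^t*q) := by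
      have h := gsIneq (q^t*q) (q^t*q) s3 s3; omega
    have s5 : (q^t*q*q-1)*(q^t*q-1) + q^t*q*q ≤ q^t*q*(q^t*q)*q := by
      have h := gsIneq (q^t*q) (q^t*q*q) s3 s3'
      have e : q^t*q*(q^t*q*q) = q^t*q*(q^t*q)*q := by ring
      omega
    refine ⟨q^t*q*(q^t*q) - q^t*q, ?_, ?_, ?_, ?_⟩
    · rw [hc2]; zify [s1, s2]; ring
    · exact hc1.le
    · rw [hc2, hg1, hg2]; zify [s1, s2, s3, s3',
        show (q^t*q-1)*(q^t*q-1) ≤ q^t*q*(q^t*q) - q^t*q from by omega,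
        show (q^t*q*q-1)*(q^t*q-1) ≤ q^t*q*(q^t*q)*q - q^t*q*q from by omega]
      ring
    · rw [hc2, hg2]; omega

lemma gsGenus (hq : 2 ≤ q) : ∀ m, 1 ≤ m →
    (∀ N, gsC q m ≤ N →
      Nat.count (fun n => n ∈ GSsemigroup q m) N = N - gsG q m)
    ∧ gsG q m ≤ gsC q m := by
  intro m hm
  induction m with
  | zero => omega
  | succ m ih =>
    rcases Nat.lt_or_ge m 1 with h1 | h1
    · obtain rfl : m = 0 := by omega
      have hg : gsG q 1 = 0 := by unfold gsG; norm_num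
      have hc : gsC q 1 = 0 := by unfold gsC; norm_num
      refine ⟨fun N _ => ?_, ?_⟩
      · show Nat.count (fun n => n ∈ GSsemigroup q 1) N = N - gsG q 1
        rw [Nat.count_eq_card_filter_range, hg,
          Finset.filter_true_of_mem (p := fun n => n ∈ GSsemigroup q 1)
            (fun x _ => Set.mem_univ x),
          Finset.card_range, Nat.sub_zero]
      · show gsG q 1 ≤ gsC q 1
        omega
    · obtain ⟨k, rfl⟩ : ∃ k, m = k+1 := ⟨m-1, by omega⟩
      obtain ⟨d, hd, hdc, hid, hgc⟩ := gsArith hq k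
      obtain ⟨ihc, ihg⟩ := ih h1
      have hq0 : 0 < q := by omega
      have himg : (Finset.range (gsC q (k+2))).filter (fun n => n ∈ GSsemigroup q (k+2))
          = ((Finset.range d).filter (fun n => n ∈ GSsemigroup q (k+1))).image (fun x => q*x) := by
        ext n
        simp only [Finset.mem_filter, Finset.mem_range, Finset.mem_image]
        constructor
        · rintro ⟨hn, hmem⟩
          obtain ⟨x, hx, rfl⟩ := gsSmall hmem hn
          refine ⟨x, ⟨?_, hx⟩, rfl⟩
          have h2 : q*x < q*d := by rw [← hd]; exact hn
          exact Nat.lt_of_mul_lt_mul_left h2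
        · rintro ⟨x, ⟨hxd, hx⟩, rfl⟩
          refine ⟨?_, Set.mem_union_left _ ⟨x, hx, rfl⟩⟩
          rw [hd]
          exact mul_lt_mul_of_pos_left hxd hq0
      have hcardc : ((Finset.range (gsC q (k+2))).filter
          (fun n => n ∈ GSsemigroup q (k+2))).card = gsC q (k+2) - gsG q (k+2) := by
        rw [himg, Finset.card_image_of_injective _
          (fun a b h => Nat.eq_of_mul_eq_mul_left hq0 h), ← Nat.count_eq_card_filter_range,
          ihc d hdc, hid]
      refine ⟨fun N hN' => ?_, hgc⟩
      have hN : gsC q (k+2) ≤ N := hN'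
      show Nat.count (fun n => n ∈ GSsemigroup q (k+2)) N = N - gsG q (k+2)
      have hsub : Finset.range N = Finset.range (gsC q (k+2)) ∪ Finset.Ico (gsC q (k+2)) N := by
        rw [Finset.range_eq_Ico, Finset.range_eq_Ico, Finset.Ico_union_Ico_eq_Ico (Nat.zero_le _) hN]
      rw [Nat.count_eq_card_filter_range, hsub, Finset.filter_union,
        Finset.card_union_of_disjoint, hcardc]
      · rw [Finset.filter_true_of_mem (fun x hx => gsMemOfLe (k+2) x (Finset.mem_Ico.1 hx).1),
          Nat.card_Ico]
        omega
      · exact Finset.disjoint_filter_filter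
          (by rw [Finset.range_eq_Ico]; exact Finset.Ico_disjoint_Ico_consecutive 0 _ N)

end aux

/-- for `c_m - g_m < i ≤ 2c_m - g_m` with `q ∤ (i + g_m)`,
`ν^m_i = 2 + 2 λ⁻¹(⌊i + g_m - c_m - 1⌋_{Λ^m}) = 2 #{α ∈ Λ^m : α < λ^m_i - c_m}`. -/
theorem stmt15 (q : ℕ) (hq : 2 ≤ q) (m : ℕ) (hm : 2 ≤ m) (i : ℕ)
    (h1 : gsC q m - gsG q m < i) (h2 : i ≤ 2 * gsC q m - gsG q m)
    (h3 : ¬ q ∣ (i + gsG q m)) :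
    gsNu q m i = 2 + 2 * gsLinv q m (gsFloor q m (i + gsG q m - gsC q m - 1)) ∧
    gsNu q m i = 2 * Set.ncard {a ∈ GSsemigroup q m | a < gsEnum q m i - gsC q m} := by
  obtain ⟨k, rfl⟩ : ∃ k, m = k+2 := ⟨m-2, by omega⟩
  have hinf : {n : ℕ | n ∈ GSsemigroup q (k+2)}.Infinite :=
    Set.infinite_of_injective_forall_mem (f := fun n : ℕ => n + gsC q (k+2))
      (add_left_injective (gsC q (k+2))) (fun n => gsMemOfLe _ _ (Nat.le_add_left _ _))
  obtain ⟨hcard, hgc⟩ := gsGenus hq (k+2) (by omega)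
  have hcL : gsC q (k+2) < i + gsG q (k+2) := by omega
  have hqc : q ∣ gsC q (k+2) := by
    have : gsC q (k+2) = q ^ (k+2) - q ^ ((k+2+1)/2) := rfl
    rw [this]
    exact Nat.dvd_sub (dvd_pow_self q (by omega)) (dvd_pow_self q (by omega))
  have hL2c : i + gsG q (k+2) < 2 * gsC q (k+2) := by
    rcases Nat.lt_or_ge (i + gsG q (k+2)) (2 * gsC q (k+2)) with h | h
    · exact h
    · exfalso
      apply h3
      have he : i + gsG q (k+2) = 2 * gsC q (k+2) := by omega
      rw [he]
      exact Dvd.dvd.mul_left hqc 2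
  -- λ_i = i + g
  have hL : gsEnum q (k+2) i = i + gsG q (k+2) := by
    have hpL : (i + gsG q (k+2)) ∈ GSsemigroup q (k+2) := gsMemOfLe _ _ (by omega)
    have hcnt : Nat.count (fun n => n ∈ GSsemigroup q (k+2)) (i + gsG q (k+2)) = i := by
      rw [hcard (i + gsG q (k+2)) (by omega)]; omega
    have h0 := Nat.nth_count (p := fun n => n ∈ GSsemigroup q (k+2)) hpL
    rw [hcnt] at h0
    exact h0
  have hdvd : ∀ x ∈ GSsemigroup q (k+2), x < gsC q (k+2) → q ∣ x := by
    intro x hx hxc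
    obtain ⟨y, -, rfl⟩ := gsSmall hx hxc
    exact dvd_mul_right q y
  -- the decomposition set
  have hnu : gsNu q (k+2) i = Set.ncard {b : ℕ | b ∈ GSsemigroup q (k+2) ∧
      ∃ a ∈ GSsemigroup q (k+2), b + a = i + gsG q (k+2)} := by
    unfold gsNu
    rw [← Set.ncard_image_of_injective _ (Nat.nth_injective hinf)]
    congr 1
    ext b
    simp only [Set.mem_image, Set.mem_setOf_eq]
    constructor
    · rintro ⟨j, ⟨a, ha, hj⟩, rfl⟩
      refine ⟨Nat.nth_mem_of_infinite hinf j, a, ha, ?_⟩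
      rw [← hL]
      exact hj
    · rintro ⟨hb, a, ha, hba⟩
      refine ⟨Nat.count (fun n => n ∈ GSsemigroup q (k+2)) b, ⟨a, ha, ?_⟩, Nat.nth_count hb⟩
      show Nat.nth _ _ + a = gsEnum q (k+2) i
      rw [Nat.nth_count hb, hL]
      exact hba
  have hDS : {b : ℕ | b ∈ GSsemigroup q (k+2) ∧
      ∃ a ∈ GSsemigroup q (k+2), b + a = i + gsG q (k+2)}
      = {b : ℕ | b ∈ GSsemigroup q (k+2) ∧ b < i + gsG q (k+2) - gsC q (k+2)}
        ∪ (fun a => i + gsG q (k+2) - a) ''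
          {b : ℕ | b ∈ GSsemigroup q (k+2) ∧ b < i + gsG q (k+2) - gsC q (k+2)} := by
    ext b
    simp only [Set.mem_union, Set.mem_setOf_eq, Set.mem_image]
    constructor
    · rintro ⟨hb, a, ha, hba⟩
      by_cases hbc : b < gsC q (k+2)
      · have hdb : q ∣ b := hdvd b hb hbc
        have hac : ¬ a < gsC q (k+2) := by
          intro hac
          exact h3 (hba ▸ Nat.dvd_add hdb (hdvd a ha hac))
        push_neg at hac
        have hbne : b ≠ i + gsG q (k+2) - gsC q (k+2) := by
          intro he
          apply h3
          have hd2 : q ∣ (b + gsC q (k+2)) := Nat.dvd_add hdb hqc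
          have heq : b + gsC q (k+2) = i + gsG q (k+2) := by omega
          rwa [heq] at hd2
        left
        exact ⟨hb, by omega⟩
      · push_neg at hbc
        have hac : a < gsC q (k+2) := by omega
        have hda : q ∣ a := hdvd a ha hac
        have hane : a ≠ i + gsG q (k+2) - gsC q (k+2) := by
          intro he
          apply h3
          have hd2 : q ∣ (a + gsC q (k+2)) := Nat.dvd_add hda hqc
          have heq : a + gsC q (k+2) = i + gsG q (k+2) := by omega
          rwa [heq] at hd2
        right
        exact ⟨a, ⟨ha, by omega⟩, by omega⟩
    · rintro (⟨hb, hblt⟩ | ⟨α, ⟨hα, hαlt⟩, heq⟩)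
      · exact ⟨hb, i + gsG q (k+2) - b, gsMemOfLe _ _ (by omega), by omega⟩
      · have heq' : i + gsG q (k+2) - α = b := heq
        subst heq'
        exact ⟨gsMemOfLe _ _ (by omega), α, hα, by omega⟩
  have hSfin : {b : ℕ | b ∈ GSsemigroup q (k+2) ∧
      b < i + gsG q (k+2) - gsC q (k+2)}.Finite :=
    (Set.finite_Iio _).subset fun x hx => hx.2
  have hTS : ((fun a => i + gsG q (k+2) - a) ''
      {b : ℕ | b ∈ GSsemigroup q (k+2) ∧ b < i + gsG q (k+2) - gsC q (k+2)}).ncard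
      = {b : ℕ | b ∈ GSsemigroup q (k+2) ∧ b < i + gsG q (k+2) - gsC q (k+2)}.ncard := by
    apply Set.ncard_image_of_injOn
    intro x hx y hy hxy
    have hxy' : i + gsG q (k+2) - x = i + gsG q (k+2) - y := hxy
    have hx2 : x < i + gsG q (k+2) - gsC q (k+2) := hx.2
    have hy2 : y < i + gsG q (k+2) - gsC q (k+2) := hy.2
    omega
  have hdisj : Disjoint
      {b : ℕ | b ∈ GSsemigroup q (k+2) ∧ b < i + gsG q (k+2) - gsC q (k+2)}
      ((fun a => i + gsG q (k+2) - a) ''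
        {b : ℕ | b ∈ GSsemigroup q (k+2) ∧ b < i + gsG q (k+2) - gsC q (k+2)}) := by
    rw [Set.disjoint_left]
    rintro b hbS ⟨α, hα, heq⟩
    have heq' : i + gsG q (k+2) - α = b := heq
    have h1' : b < i + gsG q (k+2) - gsC q (k+2) := hbS.2
    have h2' : α < i + gsG q (k+2) - gsC q (k+2) := hα.2
    omega
  have hmain : gsNu q (k+2) i = 2 * Set.ncard {b : ℕ | b ∈ GSsemigroup q (k+2) ∧
      b < i + gsG q (k+2) - gsC q (k+2)} := by
    rw [hnu, hDS, Set.ncard_union_eq hdisj hSfin (hSfin.image _), hTS]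
    ring
  constructor
  · -- first goal
    rw [hmain]
    have hKne : (0:ℕ) ∈ {x : ℕ | x ∈ GSsemigroup q (k+2) ∧
        x ≤ i + gsG q (k+2) - gsC q (k+2) - 1} := ⟨gsZero _, Nat.zero_le _⟩
    have hKbdd : BddAbove {x : ℕ | x ∈ GSsemigroup q (k+2) ∧
        x ≤ i + gsG q (k+2) - gsC q (k+2) - 1} :=
      ⟨i + gsG q (k+2) - gsC q (k+2) - 1, fun x hx => hx.2⟩
    have hFdef : gsFloor q (k+2) (i + gsG q (k+2) - gsC q (k+2) - 1)
        = sSup {x : ℕ | x ∈ GSsemigroup q (k+2) ∧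
          x ≤ i + gsG q (k+2) - gsC q (k+2) - 1} := rfl
    set F := gsFloor q (k+2) (i + gsG q (k+2) - gsC q (k+2) - 1) with hF
    have hFmem : F ∈ {x : ℕ | x ∈ GSsemigroup q (k+2) ∧
        x ≤ i + gsG q (k+2) - gsC q (k+2) - 1} := by
      rw [hFdef]
      exact Nat.sSup_mem ⟨0, hKne⟩ hKbdd
    have hFub : ∀ x ∈ {x : ℕ | x ∈ GSsemigroup q (k+2) ∧
        x ≤ i + gsG q (k+2) - gsC q (k+2) - 1}, x ≤ F := by
      intro x hx
      rw [hFdef]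
      exact le_csSup hKbdd hx
    have hSF : {b : ℕ | b ∈ GSsemigroup q (k+2) ∧ b < i + gsG q (k+2) - gsC q (k+2)}
        = insert F {y : ℕ | y ∈ GSsemigroup q (k+2) ∧ y < F} := by
      ext y
      simp only [Set.mem_setOf_eq, Set.mem_insert_iff]
      constructor
      · rintro ⟨hy, hylt⟩
        have hyK : y ∈ {x : ℕ | x ∈ GSsemigroup q (k+2) ∧
            x ≤ i + gsG q (k+2) - gsC q (k+2) - 1} := ⟨hy, by omega⟩
        have := hFub y hyK
        rcases Nat.eq_or_lt_of_le this with he | hlt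
        · exact Or.inl he
        · exact Or.inr ⟨hy, hlt⟩
      · rintro (rfl | ⟨hy, hylt⟩)
        · exact ⟨hFmem.1, by have := hFmem.2; omega⟩
        · have := hFmem.2
          exact ⟨hy, by omega⟩
    have hFnot : F ∉ {y : ℕ | y ∈ GSsemigroup q (k+2) ∧ y < F} := fun h => lt_irrefl F h.2
    have hfin2 : {y : ℕ | y ∈ GSsemigroup q (k+2) ∧ y < F}.Finite :=
      (Set.finite_Iio F).subset fun x hx => hx.2
    rw [hSF, Set.ncard_insert_of_notMem hFnot hfin2]
    have : gsLinv q (k+2) F = {y : ℕ | y ∈ GSsemigroup q (k+2) ∧ y < F}.ncard := rfl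
    rw [this]
    ring
  · -- second goal
    rw [hmain, hL]
end

section
/- Let m ≥ 2 and let i satisfy c_m − g_m < i ≤ 2c_m − g_m and q | (i + g_m). Then ν^m_i = ν^{m−1}_{(i+g_m)/q − g_{m−1}}. -/
attribute [local instance] Classical.propDecidable

namespace GS16

lemma mem_iff (q k n : ℕ) :
    n ∈ GSsemigroup q (k+2) ↔ (∃ y ∈ GSsemigroup q (k+1), q*y = n) ∨ gsC q (k+2) ≤ n := by
  have hc : gsC q (k+2) = q ^ (k + 2) - q ^ ((k + 3) / 2) := rfl
  rw [hc]
  rfl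

lemma conductor_mem (q : ℕ) : ∀ m n, gsC q m ≤ n → n ∈ GSsemigroup q m
  | 0, n, _ => Set.mem_univ n
  | 1, n, _ => Set.mem_univ n
  | (k+2), n, h => (mem_iff q k n).2 (Or.inr h)

lemma infinite (q m : ℕ) : {n | n ∈ GSsemigroup q m}.Infinite :=
  (Set.Ici_infinite (gsC q m)).mono (fun n hn => conductor_mem q m n hn)

lemma ab (m : ℕ) : (m+1)/2 + m/2 = m := by omega

lemma g_le_c (q m : ℕ) (hq : 2 ≤ q) : gsG q m ≤ gsC q m := by
  rw [gsG, gsC]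
  calc (q ^ ((m + 1) / 2) - 1) * (q ^ (m / 2) - 1)
      ≤ q ^ ((m + 1) / 2) * (q ^ (m / 2) - 1) :=
        Nat.mul_le_mul_right _ (Nat.sub_le _ _)
    _ = q ^ m - q ^ ((m + 1) / 2) := by
        rw [Nat.mul_sub, mul_one, ← pow_add, ab]

lemma c_mul (q m : ℕ) (hq : 2 ≤ q) (hm : 2 ≤ m) :
    gsC q m = q * (q ^ (m-1) - q ^ ((m+1)/2 - 1)) := by
  have h1 : q * q ^ (m-1) = q ^ m := by rw [← pow_succ']; congr 1; omega
  have h2 : q * q ^ ((m+1)/2 - 1) = q ^ ((m+1)/2) := by rw [← pow_succ']; congr 1; omega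
  rw [gsC, Nat.mul_sub, h1, h2]

lemma cq_ge (q m : ℕ) (hq : 2 ≤ q) (hm : 2 ≤ m) :
    gsC q (m-1) ≤ q ^ (m-1) - q ^ ((m+1)/2 - 1) := by
  rw [gsC]
  have h1 : (m-1+1)/2 ≥ (m+1)/2 - 1 := by omega
  have : q ^ ((m+1)/2 - 1) ≤ q ^ ((m-1+1)/2) := Nat.pow_le_pow_right (by omega) h1
  omega

lemma key_id (q A B : ℕ) (hq : 2 ≤ q) (hA1 : 1 ≤ A) (hB1 : 1 ≤ B) :
    (q*A - 1)*(B-1) + (A*B - A) = (q*A*B - q*A) + (B-1)*(A-1) := by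
  have h3 : 1 ≤ q*A := by nlinarith
  have h4 : A ≤ A*B := Nat.le_mul_of_pos_right _ (by omega)
  have h5 : q*A ≤ q*A*B := Nat.le_mul_of_pos_right _ (by omega)
  zify [hA1, hB1, h3, h4, h5]
  ring

lemma genus_rel (q m : ℕ) (hq : 2 ≤ q) (hm : 2 ≤ m) :
    gsG q m + (q ^ (m-1) - q ^ ((m+1)/2 - 1)) = gsC q m + gsG q (m-1) := by
  have ha1 : 1 ≤ (m+1)/2 := by omega
  set A := q ^ ((m+1)/2 - 1) with hA
  set B := q ^ (m/2) with hB
  have hqa : q * A = q ^ ((m+1)/2) := by rw [hA, ← pow_succ']; congr 1; omega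
  have hm1 : q ^ (m-1) = A * B := by rw [hA, hB, ← pow_add]; congr 1; omega
  have hqm : q ^ m = q * A * B := by rw [mul_assoc, ← hm1, ← pow_succ']; congr 1; omega
  have hg1 : gsG q (m-1) = (B - 1) * (A - 1) := by
    rw [gsG, hA, hB]
    congr 3
    · omega
    · omega
  have hA1 : 1 ≤ A := Nat.one_le_pow _ _ (by omega)
  have hB1 : 1 ≤ B := Nat.one_le_pow _ _ (by omega)
  rw [gsG, gsC, hg1, ← hqa, hqm, hm1]
  exact key_id q A B hq hA1 hB1


lemma c_mul' (q k : ℕ) (hq : 2 ≤ q) :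
    gsC q (k+2) = q * (q^(k+1) - q^((k+3)/2 - 1)) :=
  c_mul q (k+2) hq (by omega)

lemma cq_ge' (q k : ℕ) (hq : 2 ≤ q) :
    gsC q (k+1) ≤ q^(k+1) - q^((k+3)/2 - 1) :=
  cq_ge q (k+2) hq (by omega)

lemma genus_rel' (q k : ℕ) (hq : 2 ≤ q) :
    gsG q (k+2) + (q^(k+1) - q^((k+3)/2 - 1)) = gsC q (k+2) + gsG q (k+1) :=
  genus_rel q (k+2) hq (by omega)

lemma filter_scale (q k : ℕ) (hq : 2 ≤ q) :
    (Finset.range (gsC q (k+2))).filter (fun x => x ∈ GSsemigroup q (k+2)) =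
      Finset.image (fun y => q*y)
        ((Finset.range (q^(k+1) - q^((k+3)/2 - 1))).filter (fun y => y ∈ GSsemigroup q (k+1))) := by
  have hc : gsC q (k+2) = q * (q^(k+1) - q^((k+3)/2 - 1)) := c_mul' q k hq
  ext x
  simp only [Finset.mem_filter, Finset.mem_range, Finset.mem_image]
  constructor
  · rintro ⟨hx, hmem⟩
    rcases (mem_iff q k x).1 hmem with ⟨y, hy, rfl⟩ | hge
    · exact ⟨y, ⟨Nat.lt_of_mul_lt_mul_left (hc ▸ hx), hy⟩, rfl⟩
    · omega
  · rintro ⟨y, ⟨hy, hmem⟩, rfl⟩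
    exact ⟨by rw [hc]; exact (Nat.mul_lt_mul_left (show 0 < q by omega)).2 hy,
      (mem_iff q k _).2 (Or.inl ⟨y, hmem, rfl⟩)⟩

lemma count_add_genus (q : ℕ) (hq : 2 ≤ q) :
    ∀ m, 1 ≤ m → ∀ n, gsC q m ≤ n →
      Nat.count (fun x => x ∈ GSsemigroup q m) n + gsG q m = n := by
  intro m
  induction m with
  | zero => omega
  | succ k ih =>
    match k, ih with
    | 0, _ =>
      intro _ n _
      have hg : gsG q 1 = 0 := by simp [gsG]
      have hc0 : gsC q (0+1) = 0 := by simp [gsC]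
      rw [hg, add_zero]
      induction n with
      | zero => simp
      | succ n ihn => rw [Nat.count_succ, ihn (by omega)]; simp [GSsemigroup]
    | k'+1, ih =>
      intro _ n hn
      have base : Nat.count (fun x => x ∈ GSsemigroup q (k'+2)) (gsC q (k'+2))
          + gsG q (k'+2) = gsC q (k'+2) := by
        have h1 := ih (by omega) (q^(k'+1) - q^((k'+3)/2 - 1)) (cq_ge' q k' hq)
        have h2 := genus_rel' q k' hq
        have h3 : Nat.count (fun x => x ∈ GSsemigroup q (k'+2)) (gsC q (k'+2)) =
            Nat.count (fun y => y ∈ GSsemigroup q (k'+1)) (q^(k'+1) - q^((k'+3)/2 - 1)) := by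
          rw [Nat.count_eq_card_filter_range, Nat.count_eq_card_filter_range,
            filter_scale q k' hq,
            Finset.card_image_of_injective _ (mul_right_injective₀ (show q ≠ 0 by omega))]
        omega
      induction n, hn using Nat.le_induction with
      | base => exact base
      | succ n hn ihn =>
        rw [Nat.count_succ, if_pos (conductor_mem q (k'+2) n hn)]
        omega


lemma enum_eq (q : ℕ) (hq : 2 ≤ q) (m : ℕ) (hm : 1 ≤ m) (n : ℕ) (hn : gsC q m ≤ n) :
    gsEnum q m (n - gsG q m) = n := by
  have h := count_add_genus q hq m hm n hn
  have hpn : (fun x => x ∈ GSsemigroup q m) n := conductor_mem q m n hn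
  have h2 := Nat.nth_count hpn
  show Nat.nth (fun x => x ∈ GSsemigroup q m) (n - gsG q m) = n
  rw [show n - gsG q m = Nat.count (fun x => x ∈ GSsemigroup q m) n from by omega]
  exact h2

lemma nu_eq (q m i : ℕ) :
    gsNu q m i =
      {x | x ∈ GSsemigroup q m ∧ ∃ a ∈ GSsemigroup q m, x + a = gsEnum q m i}.ncard := by
  have hinf := infinite q m
  rw [gsNu, ← Set.ncard_image_of_injective _ (Nat.nth_injective hinf)]
  congr 1
  ext x
  simp only [Set.mem_image, Set.mem_setOf_eq]
  constructor
  · rintro ⟨j, ⟨a, ha, hja⟩, rfl⟩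
    exact ⟨Nat.nth_mem_of_infinite hinf j, a, ha, hja⟩
  · rintro ⟨hx, a, ha, hxa⟩
    obtain ⟨j, hj⟩ : x ∈ Set.range (Nat.nth fun n => n ∈ GSsemigroup q m) := by
      rw [Nat.range_nth_of_infinite hinf]; exact hx
    exact ⟨j, ⟨a, ha, by rw [show gsEnum q m j = x from hj]; exact hxa⟩, hj⟩

lemma qdvd_c (q k : ℕ) (hq : 2 ≤ q) : q ∣ gsC q (k+2) := ⟨_, c_mul' q k hq⟩

lemma div_mem (q k x : ℕ) (hq : 2 ≤ q) (hx : x ∈ GSsemigroup q (k+2)) (hd : q ∣ x) :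
    x / q ∈ GSsemigroup q (k+1) := by
  rcases (mem_iff q k x).1 hx with ⟨y, hy, rfl⟩ | hge
  · rwa [Nat.mul_div_cancel_left y (by omega)]
  · apply conductor_mem
    have h1 : gsC q (k+2) / q ≤ x / q := Nat.div_le_div_right hge
    rw [c_mul' q k hq, Nat.mul_div_cancel_left _ (show 0 < q by omega)] at h1
    exact le_trans (cq_ge' q k hq) h1

lemma scale_set (q k n : ℕ) (hq : 2 ≤ q) (hn2 : n ≤ 2 * gsC q (k+2)) (hd : q ∣ n) :
    {x | x ∈ GSsemigroup q (k+2) ∧ ∃ a ∈ GSsemigroup q (k+2), x + a = n} =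
      (fun y => q*y) ''
        {y | y ∈ GSsemigroup q (k+1) ∧ ∃ b ∈ GSsemigroup q (k+1), y + b = n/q} := by
  have hq0 : 0 < q := by omega
  have key : ∀ z, z ∈ GSsemigroup q (k+2) → ¬ q ∣ z → gsC q (k+2) + 1 ≤ z := by
    intro z hz hnz
    rcases (mem_iff q k z).1 hz with ⟨y, _, rfl⟩ | hge
    · exact absurd ⟨y, rfl⟩ hnz
    · rcases Nat.eq_or_lt_of_le hge with heq | hlt
      · exact absurd (heq ▸ qdvd_c q k hq) hnz
      · omega
  ext x
  simp only [Set.mem_setOf_eq, Set.mem_image]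
  constructor
  · rintro ⟨hx, a, ha, hxa⟩
    have hdx : q ∣ x := by
      by_contra hq1
      have hq2 : ¬ q ∣ a := by
        intro h
        apply hq1
        rw [show x = n - a from by omega]
        exact Nat.dvd_sub hd h
      have hxc := key x hx hq1
      have hac := key a ha hq2
      omega
    have hda : q ∣ a := by
      rw [show a = n - x from by omega]
      exact Nat.dvd_sub hd hdx
    obtain ⟨y, rfl⟩ := hdx
    obtain ⟨b, rfl⟩ := hda
    have hym : y ∈ GSsemigroup q (k+1) := by
      have := div_mem q k (q*y) hq hx ⟨y, rfl⟩
      rwa [Nat.mul_div_cancel_left _ hq0] at this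
    have hbm : b ∈ GSsemigroup q (k+1) := by
      have := div_mem q k (q*b) hq ha ⟨b, rfl⟩
      rwa [Nat.mul_div_cancel_left _ hq0] at this
    refine ⟨y, ⟨hym, b, hbm, ?_⟩, rfl⟩
    have hne : n = q * (y + b) := by rw [← hxa]; ring
    rw [hne, Nat.mul_div_cancel_left _ hq0]
  · rintro ⟨y, ⟨hy, b, hb, hyb⟩, rfl⟩
    refine ⟨(mem_iff q k _).2 (Or.inl ⟨y, hy, rfl⟩), q*b,
      (mem_iff q k _).2 (Or.inl ⟨b, hb, rfl⟩), ?_⟩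
    calc q*y + q*b = q*(y+b) := by ring
      _ = q*(n/q) := by rw [hyb]
      _ = n := Nat.mul_div_cancel' hd

end GS16

/-- for `c_m - g_m < i ≤ 2c_m - g_m` with `q ∣ (i + g_m)`,
`ν^m_i = ν^{m-1}_{(i+g_m)/q - g_{m-1}}`. -/
theorem stmt16 (q : ℕ) (hq : 2 ≤ q) (m : ℕ) (hm : 2 ≤ m) (i : ℕ)
    (h1 : gsC q m - gsG q m < i) (h2 : i ≤ 2 * gsC q m - gsG q m)
    (h3 : q ∣ (i + gsG q m)) :
    gsNu q m i = gsNu q (m - 1) ((i + gsG q m) / q - gsG q (m - 1)) := by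
  obtain ⟨k, rfl⟩ : ∃ k, m = k + 2 := ⟨m - 2, by omega⟩
  set n := i + gsG q (k+2) with hn
  have hgc := GS16.g_le_c q (k+2) hq
  have hgc' := GS16.g_le_c q (k+1) hq
  have hcn : gsC q (k+2) ≤ n := by omega
  have hn2 : n ≤ 2 * gsC q (k+2) := by omega
  have hq0 : 0 < q := by omega
  have hEi : gsEnum q (k+2) i = n := by
    have h := GS16.enum_eq q hq (k+2) (by omega) n hcn
    rwa [show n - gsG q (k+2) = i from by omega] at h
  have hcq : gsC q (k+1) ≤ n / q := by
    have h1' : gsC q (k+2) / q ≤ n / q := Nat.div_le_div_right hcn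
    rw [GS16.c_mul' q k hq, Nat.mul_div_cancel_left _ hq0] at h1'
    exact le_trans (GS16.cq_ge' q k hq) h1'
  have hm1 : (k + 2) - 1 = k + 1 := rfl
  rw [hm1]
  have hEi' : gsEnum q (k+1) (n / q - gsG q (k+1)) = n / q :=
    GS16.enum_eq q hq (k+1) (by omega) (n/q) hcq
  rw [GS16.nu_eq, GS16.nu_eq, hEi, hEi']
  rw [GS16.scale_set q k n hq hn2 h3]
  exact Set.ncard_image_of_injective _ (mul_right_injective₀ (show q ≠ 0 by omega))
end

section
/- Let m ≥ 2 and i with c_m − g_m < i ≤ 2c_m − g_m − 2 and q | (i + 1 + g_m). Then ν^m_{i+1} ≥ ν^m_{i+2}; consequently the order bound δ^m_i := min{ν^m_j : j > i} satisfies δ^m_i = ν^m_{i+2} in this case. -/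
lemma gs17_mem_iff (q k n : ℕ) :
    n ∈ GSsemigroup q (k + 2) ↔ (∃ j ∈ GSsemigroup q (k + 1), q * j = n) ∨ gsC q (k + 2) ≤ n := by
  have h23 : (k + 2 + 1) = k + 3 := by omega
  simp [GSsemigroup, gsC, h23, Set.mem_union, Set.mem_image, Set.mem_setOf_eq]

lemma gs17_mem_of_le {q m n : ℕ} (hm : 2 ≤ m) (h : gsC q m ≤ n) : n ∈ GSsemigroup q m := by
  obtain ⟨k, rfl⟩ : ∃ k, m = k + 2 := ⟨m - 2, by omega⟩
  exact (gs17_mem_iff q k n).2 (Or.inr h)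

lemma gs17_count_steps (p : ℕ → Prop) [DecidablePred p] {a b : ℕ} (h : a ≤ b)
    (hall : ∀ n, a ≤ n → n < b → p n) : Nat.count p b = Nat.count p a + (b - a) := by
  induction b, h using Nat.le_induction with
  | base => simp
  | succ b hab ih =>
    rw [Nat.count_succ, ih (fun n h1 h2 => hall n h1 (by omega)), if_pos (hall b hab (by omega))]
    omega

lemma gs17_c_succ {q : ℕ} (hq : 2 ≤ q) (m : ℕ) : gsC q (m + 1) = (q ^ m - q ^ (m / 2)) * q := by
  have h2 : (m + 1 + 1) / 2 = m / 2 + 1 := by omega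
  rw [gsC, h2, pow_succ, pow_succ, ← Nat.sub_mul]

lemma gs17_key_arith {q : ℕ} (hq : 2 ≤ q) (m : ℕ) :
    (q ^ m - q ^ (m / 2)) + gsG q (m + 1) = gsC q (m + 1) + gsG q m := by
  have h2 : (m + 1 + 1) / 2 = m / 2 + 1 := by omega
  have hBC : q ^ ((m + 1) / 2) * q ^ (m / 2) = q ^ m := by rw [← pow_add]; congr 1; omega
  rw [gsG, gsG, gsC, h2, pow_succ, pow_succ, ← hBC]
  set B := q ^ ((m + 1) / 2) with hB
  set C := q ^ (m / 2) with hC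
  have hB1 : 1 ≤ B := Nat.one_le_pow _ _ (by omega)
  have hC1 : 1 ≤ C := Nat.one_le_pow _ _ (by omega)
  have h3 : C ≤ B * C := Nat.le_mul_of_pos_left _ (by omega)
  have h4 : C * q ≤ B * C * q := Nat.mul_le_mul_right _ h3
  have h5 : 1 ≤ C * q := by nlinarith
  zify [h3, h4, h5, hB1, hC1]
  ring

lemma gs17_c_le_div {q : ℕ} (hq : 2 ≤ q) (m : ℕ) : gsC q m ≤ q ^ m - q ^ (m / 2) :=
  Nat.sub_le_sub_left (Nat.pow_le_pow_right (by omega) (by omega)) _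

open Classical in
lemma gs17_count_genus {q : ℕ} (hq : 2 ≤ q) :
    ∀ m, 1 ≤ m → ∀ T, gsC q m ≤ T →
      Nat.count (fun n => n ∈ GSsemigroup q m) T + gsG q m = T := by
  intro m hm
  induction m, hm using Nat.le_induction with
  | base =>
    intro T _
    have hg : gsG q 1 = 0 := by simp [gsG]
    rw [hg, Nat.count_eq_card_filter_range]
    have : ∀ x ∈ Finset.range T, x ∈ GSsemigroup q 1 := by
      intro x _; show x ∈ Set.univ; trivial
    rw [Finset.filter_true_of_mem this, Finset.card_range]
    omega
  | succ m hm ih =>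
    obtain ⟨k, rfl⟩ : ∃ k, m = k + 1 := ⟨m - 1, by omega⟩
    have hq0 : 0 < q := by omega
    set D := q ^ (k + 1) - q ^ ((k + 1) / 2) with hD
    have hcD : gsC q (k + 2) = D * q := gs17_c_succ hq (k + 1)
    have hcount : Nat.count (fun n => n ∈ GSsemigroup q (k + 2)) (gsC q (k + 2)) =
        Nat.count (fun n => n ∈ GSsemigroup q (k + 1)) D := by
      rw [Nat.count_eq_card_filter_range, Nat.count_eq_card_filter_range]
      refine (Finset.card_nbij (fun j => q * j) ?_ ?_ ?_).symm
      · intro a ha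
        simp only [Finset.mem_coe, Finset.mem_filter, Finset.mem_range] at *
        obtain ⟨ha1, ha2⟩ := ha
        refine ⟨?_, (gs17_mem_iff q k (q * a)).2 (Or.inl ⟨a, ha2, rfl⟩)⟩
        rw [hcD, mul_comm D q]
        exact (Nat.mul_lt_mul_left hq0).2 ha1
      · intro a _ b _ h
        exact Nat.eq_of_mul_eq_mul_left hq0 h
      · intro n hn
        simp only [Finset.coe_filter, Finset.mem_range, Set.mem_setOf_eq] at hn
        obtain ⟨hn1, hn2⟩ := hn
        rcases (gs17_mem_iff q k n).1 hn2 with ⟨j, hj, rfl⟩ | h'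
        · refine ⟨j, ?_, rfl⟩
          simp only [Finset.coe_filter, Finset.mem_range, Set.mem_setOf_eq]
          refine ⟨?_, hj⟩
          rw [hcD, mul_comm D q] at hn1
          exact Nat.lt_of_mul_lt_mul_left hn1
        · omega
    intro T hT
    rw [gs17_count_steps _ hT (fun n hn _ => gs17_mem_of_le (by omega) hn), hcount]
    have hih := ih D (gs17_c_le_div hq (k + 1))
    have hka := gs17_key_arith hq (k + 1)
    rw [← hD] at hka
    omega

lemma gs17_dvd {q m n : ℕ} (hm : 2 ≤ m) (hn : n ∈ GSsemigroup q m) (h : n < gsC q m) : q ∣ n := by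
  obtain ⟨k, rfl⟩ : ∃ k, m = k + 2 := ⟨m - 2, by omega⟩
  rcases (gs17_mem_iff q k n).1 hn with ⟨j, _, rfl⟩ | h'
  · exact Dvd.intro j rfl
  · omega

lemma gs17_infinite {q m : ℕ} (hm : 2 ≤ m) : {n | n ∈ GSsemigroup q m}.Infinite :=
  (Set.Ici_infinite (gsC q m)).mono (fun n hn => gs17_mem_of_le hm hn)

lemma gs17_dvd_c {q m : ℕ} (hm : 1 ≤ m) : q ∣ gsC q m :=
  Nat.dvd_sub (dvd_pow_self q (by omega)) (dvd_pow_self q (by omega))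

lemma gs17_g_le_c {q m : ℕ} (hq : 2 ≤ q) (hm : 2 ≤ m) : gsG q m ≤ gsC q m := by
  have := gs17_count_genus hq m (by omega) (gsC q m) le_rfl
  omega

open Classical in
lemma gs17_enum_eq {q m : ℕ} (hq : 2 ≤ q) (hm : 2 ≤ m) {k : ℕ}
    (hk : gsC q m - gsG q m ≤ k) : gsEnum q m k = k + gsG q m := by
  have hcg := gs17_g_le_c hq hm
  have hck : gsC q m ≤ k + gsG q m := by omega
  have h1 := gs17_count_genus hq m (by omega) (k + gsG q m) hck
  have h2 : Nat.count (fun n => n ∈ GSsemigroup q m) (k + gsG q m) = k := by omega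
  have h3 := Nat.nth_count (p := fun n => n ∈ GSsemigroup q m) (gs17_mem_of_le hm hck)
  rw [h2] at h3
  exact h3

lemma gs17_enum_lt {q m : ℕ} (hq : 2 ≤ q) (hm : 2 ≤ m) {j : ℕ}
    (hj : j < gsC q m - gsG q m) : gsEnum q m j < gsC q m := by
  have h1 : gsEnum q m (gsC q m - gsG q m) = gsC q m := by
    rw [gs17_enum_eq hq hm le_rfl]
    have := gs17_g_le_c hq hm
    omega
  have h2 : gsEnum q m j < gsEnum q m (gsC q m - gsG q m) :=
    (Nat.nth_lt_nth (gs17_infinite hm)).2 hj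
  omega

lemma gs17_le_enum {q m : ℕ} (hm : 2 ≤ m) (j : ℕ) : j ≤ gsEnum q m j :=
  Nat.le_nth (fun hf => ((gs17_infinite hm) hf).elim)

lemma gs17_enum_mem {q m : ℕ} (hm : 2 ≤ m) (j : ℕ) : gsEnum q m j ∈ GSsemigroup q m :=
  Nat.nth_mem_of_infinite (gs17_infinite hm) j

/-- for `c_m - g_m < i ≤ 2c_m - g_m - 2` with `q ∣ (i + 1 + g_m)`,
`ν^m_{i+1} ≥ ν^m_{i+2}`, and consequently `δ^m_i = ν^m_{i+2}`. -/
theorem stmt17 (q : ℕ) (hq : 2 ≤ q) (m : ℕ) (hm : 2 ≤ m) (i : ℕ)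
    (h1 : gsC q m - gsG q m < i) (h2 : i ≤ 2 * gsC q m - gsG q m - 2)
    (h3 : q ∣ (i + 1 + gsG q m)) :
    gsNu q m (i + 2) ≤ gsNu q m (i + 1) ∧ gsDelta q m i = gsNu q m (i + 2) := by
  have hB2 : 2 ≤ q ^ ((m + 1) / 2) := le_trans hq (Nat.le_self_pow (by omega) q)
  have hC2 : 2 ≤ q ^ (m / 2) := le_trans hq (Nat.le_self_pow (by omega) q)
  obtain ⟨b, hb⟩ : ∃ b, q ^ ((m + 1) / 2) = b + 2 := ⟨q ^ ((m + 1) / 2) - 2, by omega⟩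
  obtain ⟨c0, hc0⟩ : ∃ c0, q ^ (m / 2) = c0 + 2 := ⟨q ^ (m / 2) - 2, by omega⟩
  have hPm : q ^ m = b * c0 + 2 * b + 2 * c0 + 4 := by
    rw [show m = (m + 1) / 2 + m / 2 by omega, pow_add, hb, hc0]; ring
  have hcE : gsC q m = b * c0 + b + 2 * c0 + 2 := by
    rw [gsC, hPm, hb]; omega
  have hgE : gsG q m = b * c0 + b + c0 + 1 := by
    rw [gsG, hb, hc0]; show (b + 1) * (c0 + 1) = _; ring
  have hqc : q ∣ gsC q m := gs17_dvd_c (by omega)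
  have hx2c : i + 2 + gsG q m < 2 * gsC q m := by
    rcases Nat.lt_or_ge (i + 2 + gsG q m) (2 * gsC q m) with h | h
    · exact h
    · exfalso
      have he : 2 * gsC q m - (i + 1 + gsG q m) = 1 := by omega
      have hd : q ∣ 2 * gsC q m - (i + 1 + gsG q m) := Nat.dvd_sub (hqc.mul_left 2) h3
      rw [he] at hd
      have := Nat.le_of_dvd one_pos hd
      omega
  have hqx' : ¬ q ∣ (i + 2 + gsG q m) := by
    intro h
    have hd : q ∣ (i + 2 + gsG q m) - (i + 1 + gsG q m) := Nat.dvd_sub h h3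
    have he : (i + 2 + gsG q m) - (i + 1 + gsG q m) = 1 := by omega
    rw [he] at hd
    have := Nat.le_of_dvd one_pos hd
    omega
  have henum : ∀ k, gsC q m - gsG q m ≤ k → gsEnum q m k = k + gsG q m :=
    fun k hk => gs17_enum_eq hq hm hk
  have hx2 : gsEnum q m (i + 2) = i + 2 + gsG q m := henum _ (by omega)
  have key : ∀ J, i + 1 ≤ J → gsNu q m (i + 2) ≤ gsNu q m J := by
    intro J hJ
    have hlamJ : gsEnum q m J = J + gsG q m := henum _ (by omega)
    have hidx : ∀ j, (∃ a ∈ GSsemigroup q m, gsEnum q m j + a = gsEnum q m (i + 2)) →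
        ¬ gsEnum q m j < gsC q m →
        gsC q m - gsG q m + 1 ≤ j ∧ gsEnum q m j = j + gsG q m := by
      intro j hj hge
      obtain ⟨a, haM, hsum⟩ := hj
      push_neg at hge
      have hne : gsEnum q m j ≠ gsC q m := by
        intro he
        have ha_eq : gsC q m + a = i + 2 + gsG q m := by rw [← he, hsum, hx2]
        have haq : q ∣ a := gs17_dvd hm haM (by omega)
        have hd : q ∣ gsC q m + a := Nat.dvd_add hqc haq
        rw [ha_eq] at hd
        exact hqx' hd
      have hjge : gsC q m - gsG q m ≤ j := by
        by_contra hlt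
        push_neg at hlt
        have := gs17_enum_lt hq hm hlt
        omega
      have hlamj := henum j hjge
      exact ⟨by omega, hlamj⟩
    have hwit : ∀ j, gsEnum q m j < gsC q m →
        ∀ a, a ∈ GSsemigroup q m → gsEnum q m j + a = gsEnum q m (i + 2) →
        gsC q m + 1 ≤ a := by
      intro j hlt a haM hsum
      have hjq : q ∣ gsEnum q m j := gs17_dvd hm (gs17_enum_mem hm j) hlt
      by_contra hle
      push_neg at hle
      rcases Nat.lt_or_ge a (gsC q m) with hac | hac
      · have haq : q ∣ a := gs17_dvd hm haM hac
        have hd : q ∣ gsEnum q m j + a := Nat.dvd_add hjq haq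
        rw [hsum, hx2] at hd
        exact hqx' hd
      · have hae : a = gsC q m := by omega
        have hd : q ∣ gsEnum q m j + a := Nat.dvd_add hjq (hae ▸ hqc)
        rw [hsum, hx2] at hd
        exact hqx' hd
    unfold gsNu
    refine Set.ncard_le_ncard_of_injOn
      (fun j => if gsEnum q m j < gsC q m then j else j + J - (i + 2)) ?_ ?_ ?_
    · intro j hj
      simp only [Set.mem_setOf_eq] at hj ⊢
      obtain ⟨a, haM, hsum⟩ := hj
      by_cases hlt : gsEnum q m j < gsC q m
      · rw [if_pos hlt]
        have ha := hwit j hlt a haM hsum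
        refine ⟨a + J - (i + 2), gs17_mem_of_le hm (by omega), ?_⟩
        rw [hlamJ]
        rw [hx2] at hsum
        omega
      · rw [if_neg hlt]
        obtain ⟨hj1, hj2⟩ := hidx j ⟨a, haM, hsum⟩ hlt
        refine ⟨a, haM, ?_⟩
        rw [henum (j + J - (i + 2)) (by omega), hlamJ]
        rw [hx2, hj2] at hsum
        omega
    · intro j1 hj1 j2 hj2 heq
      simp only [Set.mem_setOf_eq] at hj1 hj2
      simp only at heq
      by_cases h1c : gsEnum q m j1 < gsC q m <;> by_cases h2c : gsEnum q m j2 < gsC q m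
      · rw [if_pos h1c, if_pos h2c] at heq; exact heq
      · rw [if_pos h1c, if_neg h2c] at heq
        exfalso
        obtain ⟨hj21, _⟩ := hidx j2 hj2 h2c
        have hF : gsEnum q m (j2 + J - (i + 2)) = (j2 + J - (i + 2)) + gsG q m :=
          henum _ (by omega)
        rw [← heq] at hF
        omega
      · rw [if_neg h1c, if_pos h2c] at heq
        exfalso
        obtain ⟨hj11, _⟩ := hidx j1 hj1 h1c
        have hF : gsEnum q m (j1 + J - (i + 2)) = (j1 + J - (i + 2)) + gsG q m :=
          henum _ (by omega)
        rw [heq] at hF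
        omega
      · rw [if_neg h1c, if_neg h2c] at heq
        obtain ⟨hj11, _⟩ := hidx j1 hj1 h1c
        obtain ⟨hj21, _⟩ := hidx j2 hj2 h2c
        omega
    · refine Set.Finite.subset (Set.finite_Iic (gsEnum q m J)) ?_
      intro j hj
      simp only [Set.mem_setOf_eq] at hj
      obtain ⟨a, _, hsum⟩ := hj
      have := gs17_le_enum (q := q) (m := m) hm j
      simp only [Set.mem_Iic]
      omega
  refine ⟨key (i + 1) (by omega), ?_⟩
  unfold gsDelta
  have hmem : gsNu q m (i + 2) ∈ gsNu q m '' {j : ℕ | i < j} :=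
    ⟨i + 2, by simp, rfl⟩
  refine le_antisymm (Nat.sInf_le hmem) ?_
  refine le_csInf ⟨_, hmem⟩ ?_
  rintro y ⟨J, hJ, rfl⟩
  exact key J (by simpa using hJ)
end
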